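/- arXiv:2301.04142 — 12 statements merged into one kernel-verified Lean document; each statement's English description precedes it below -/
import Mathlib

section
/- Let N : ℕ, let ℏ > 0 and Δt > 0 be real numbers, let H : Matrix (Fin N) (Fin N) ℝ be symmetric (Hᵀ = H), and let V := Matrix.diagonal d with d : Fin N → ℝ satisfying d i > 0 for all i. Define the block matrix 𝒫 := Matrix.fromBlocks V (-(Δt/(2*ℏ)) • H) (-(Δt/(2*ℏ)) • H) V, indexed by Fin N ⊕ Fin N, and the symmetric matrix Σ := (1/ℏ) • (D * H * D), where D := Matrix.diagonal (fun i => 1/Real.sqrt (d i)). Then 𝒫 is positive definite if and only if every eigenvalue μ ∈ spectrum ℝ Σ satisfies Δt * |μ| < 2. -/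
open Matrix

section Helpers

variable {m p : Type*} [Fintype m] [DecidableEq m] [Fintype p] [DecidableEq p]

/-- Congruence by an invertible matrix preserves positive definiteness (one direction). -/
lemma aux_conj_posDef (A B : Matrix m m ℝ) (hB : IsUnit B) (hA : A.PosDef) :
    (Bᵀ * A * B).PosDef := by
  have hBinj : Function.Injective (B.mulVec) := mulVec_injective_iff_isUnit.mpr hB
  refine Matrix.PosDef.of_dotProduct_mulVec_pos ?_ (fun x hx => ?_)
  · have h1 : Aᵀ = A := by
      exact (Matrix.conjTranspose_eq_transpose_of_trivial A).symm.trans hA.1.eq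
    simp [Matrix.IsHermitian, Matrix.conjTranspose_eq_transpose_of_trivial,
      Matrix.transpose_mul, h1, Matrix.mul_assoc]
  · have hx' : B *ᵥ x ≠ 0 := fun h => hx (hBinj (by simpa using h))
    have h2 := hA.dotProduct_mulVec_pos hx'
    rw [star_trivial] at h2
    rw [star_trivial, show (Bᵀ * A * B) *ᵥ x = Bᵀ *ᵥ (A *ᵥ (B *ᵥ x)) by
      rw [← Matrix.mulVec_mulVec, ← Matrix.mulVec_mulVec],
      Matrix.dotProduct_mulVec, Matrix.vecMul_transpose]
    exact h2

lemma aux_conj_posDef_iff (A B : Matrix m m ℝ) (hB : IsUnit B) :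
    (Bᵀ * A * B).PosDef ↔ A.PosDef := by
  constructor
  · intro h
    have hBd : IsUnit B.det := (Matrix.isUnit_iff_isUnit_det B).mp hB
    have hBinv : IsUnit B⁻¹ := Matrix.isUnit_nonsing_inv_iff.mpr hB
    have h2 := aux_conj_posDef (Bᵀ * A * B) B⁻¹ hBinv h
    have heq : (B⁻¹)ᵀ * (Bᵀ * A * B) * B⁻¹ = A := by
      simp only [Matrix.mul_assoc]
      rw [Matrix.mul_nonsing_inv _ hBd, Matrix.mul_one, ← Matrix.mul_assoc,
        ← Matrix.transpose_mul, Matrix.mul_nonsing_inv _ hBd, Matrix.transpose_one,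
        Matrix.one_mul]
    rwa [heq] at h2
  · exact aux_conj_posDef A B hB

omit [DecidableEq m] [DecidableEq p] in
lemma aux_fromBlocks_posDef_iff (A : Matrix m m ℝ) (D : Matrix p p ℝ) :
    (Matrix.fromBlocks A 0 0 D).PosDef ↔ A.PosDef ∧ D.PosDef := by
  constructor
  · intro h
    obtain ⟨hHerm, hpos⟩ := Matrix.posDef_iff_dotProduct_mulVec.mp h
    rw [Matrix.isHermitian_fromBlocks_iff] at hHerm
    refine ⟨.of_dotProduct_mulVec_pos hHerm.1 (fun x hx => ?_),
      .of_dotProduct_mulVec_pos hHerm.2.2.2 (fun y hy => ?_)⟩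
    · have hne : (Sum.elim x (0 : p → ℝ)) ≠ 0 := by
        intro hc; exact hx (by ext i; exact congrFun hc (Sum.inl i))
      have := hpos hne
      simpa [Matrix.fromBlocks_mulVec, sumElim_dotProduct_sumElim] using this
    · have hne : (Sum.elim (0 : m → ℝ) y) ≠ 0 := by
        intro hc; exact hy (by ext i; exact congrFun hc (Sum.inr i))
      have := hpos hne
      simpa [Matrix.fromBlocks_mulVec, sumElim_dotProduct_sumElim] using this
  · rintro ⟨hA, hD⟩
    refine Matrix.PosDef.of_dotProduct_mulVec_pos ?_ (fun z hz => ?_)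
    · rw [Matrix.isHermitian_fromBlocks_iff]
      exact ⟨hA.1, by simp, by simp, hD.1⟩
    · have hz' : z = Sum.elim (z ∘ Sum.inl) (z ∘ Sum.inr) := by
        ext i; cases i <;> rfl
      have hor : (z ∘ Sum.inl) ≠ 0 ∨ (z ∘ Sum.inr) ≠ 0 := by
        by_contra hc
        push_neg at hc
        apply hz
        ext i
        cases i with
        | inl i => exact congrFun hc.1 i
        | inr i => exact congrFun hc.2 i
      rw [hz', star_trivial]
      rw [Matrix.fromBlocks_mulVec]
      simp only [Matrix.zero_mulVec, add_zero, zero_add,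
        sumElim_dotProduct_sumElim]
      rcases hor with hx | hy
      · have h1 := hA.dotProduct_mulVec_pos hx
        rw [star_trivial] at h1
        have h2 := hD.posSemidef.dotProduct_mulVec_nonneg (z ∘ Sum.inr)
        rw [star_trivial] at h2
        simpa using add_pos_of_pos_of_nonneg h1 h2
      · have h1 := hA.posSemidef.dotProduct_mulVec_nonneg (z ∘ Sum.inl)
        rw [star_trivial] at h1
        have h2 := hD.dotProduct_mulVec_pos hy
        rw [star_trivial] at h2
        simpa using add_pos_of_nonneg_of_pos h1 h2

/-- For a real symmetric matrix, the spectrum is the range of the eigenvalues. -/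
lemma aux_spec_range (S : Matrix m m ℝ) (hS : S.IsHermitian) :
    spectrum ℝ S = Set.range hS.eigenvalues := by
  conv_lhs => rw [hS.spectral_theorem]
  rw [Unitary.conjStarAlgAut_apply, Unitary.spectrum_star_right_conjugate]
  rw [spectrum_diagonal]
  ext μ
  simp [Set.range, Function.comp]

/-- Positive definiteness of `a • 1 + c • S` in terms of the spectrum of `S`. -/
lemma aux_shift_posDef_iff (S : Matrix m m ℝ) (hS : S.IsHermitian) (a c : ℝ) :
    (a • (1 : Matrix m m ℝ) + c • S).PosDef
      ↔ ∀ μ ∈ spectrum ℝ S, 0 < a + c * μ := by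
  have key : a • (1 : Matrix m m ℝ) + c • S
      = (hS.eigenvectorUnitary : Matrix m m ℝ)
        * Matrix.diagonal (fun i => a + c * hS.eigenvalues i)
        * star (hS.eigenvectorUnitary : Matrix m m ℝ) := by
    have hU : (hS.eigenvectorUnitary : Matrix m m ℝ)
        * star (hS.eigenvectorUnitary : Matrix m m ℝ) = 1 :=
      Unitary.mul_star_self_of_mem hS.eigenvectorUnitary.2
    have hdiag : Matrix.diagonal (fun i => a + c * hS.eigenvalues i)
        = a • (1 : Matrix m m ℝ) + c • Matrix.diagonal (RCLike.ofReal ∘ hS.eigenvalues) := by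
      ext i j
      by_cases h : i = j
      · subst h
        simp [Matrix.one_apply, Matrix.diagonal_apply]
      · simp [Matrix.diagonal_apply_ne _ h, Matrix.one_apply_ne h]
    rw [hdiag]
    rw [Matrix.mul_add, Matrix.add_mul, Matrix.mul_smul, Matrix.smul_mul, Matrix.mul_one,
      hU, Matrix.mul_smul, Matrix.smul_mul]
    conv_lhs => rw [hS.spectral_theorem, Unitary.conjStarAlgAut_apply]
  have hstar : (star (hS.eigenvectorUnitary : Matrix m m ℝ))ᵀ
      = (hS.eigenvectorUnitary : Matrix m m ℝ) := by
    rw [Matrix.star_eq_conjTranspose, Matrix.conjTranspose_eq_transpose_of_trivial,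
      Matrix.transpose_transpose]
  have hUunit : IsUnit (star (hS.eigenvectorUnitary : Matrix m m ℝ)) :=
    IsUnit.star ⟨Unitary.toUnits hS.eigenvectorUnitary, rfl⟩
  have key2 : a • (1 : Matrix m m ℝ) + c • S
      = (star (hS.eigenvectorUnitary : Matrix m m ℝ))ᵀ
        * Matrix.diagonal (fun i => a + c * hS.eigenvalues i)
        * star (hS.eigenvectorUnitary : Matrix m m ℝ) := by
    rw [hstar]; exact key
  rw [key2, aux_conj_posDef_iff _ _ hUunit, Matrix.posDef_diagonal_iff,
    aux_spec_range S hS, Set.forall_mem_range]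

end Helpers

/-- Lemma 1 of the paper: the FDTD-Q probability matrix `𝒫` is positive definite
iff the time step `Δt` is below the generalized CFL limit `2 / ρ(Σ)`. -/
theorem fdtdq_posdef_iff_generalized_CFL
    (N : ℕ) (ℏ Δt : ℝ) (hℏ : 0 < ℏ) (hΔt : 0 < Δt)
    (H : Matrix (Fin N) (Fin N) ℝ) (hH : Hᵀ = H)
    (d : Fin N → ℝ) (hd : ∀ i, 0 < d i) :
    (Matrix.fromBlocks (Matrix.diagonal d) (-(Δt/(2*ℏ)) • H)
        (-(Δt/(2*ℏ)) • H) (Matrix.diagonal d)).PosDef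
      ↔ ∀ μ ∈ spectrum ℝ
          ((1/ℏ) • (Matrix.diagonal (fun i => 1 / Real.sqrt (d i)) * H
            * Matrix.diagonal (fun i => 1 / Real.sqrt (d i)))),
          Δt * |μ| < 2 := by
  have n_def : True := trivial
  set D : Matrix (Fin N) (Fin N) ℝ := Matrix.diagonal (fun i => 1 / Real.sqrt (d i)) with hD
  set SigM : Matrix (Fin N) (Fin N) ℝ := (1/ℏ) • (D * H * D) with hSigM
  have hsqrt_pos : ∀ i, 0 < Real.sqrt (d i) := fun i => Real.sqrt_pos.mpr (hd i)
  -- Σ is symmetric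
  have hSigherm : SigM.IsHermitian := by
    unfold SigM D
    simp only [Matrix.IsHermitian, Matrix.conjTranspose_smul, Matrix.conjTranspose_mul,
      Matrix.conjTranspose_eq_transpose_of_trivial, Matrix.transpose_smul,
      Matrix.transpose_mul, Matrix.diagonal_transpose, hH, Matrix.mul_assoc, star_trivial]
  -- D is invertible
  have hDunit : IsUnit D := by
    refine (Matrix.isUnit_iff_isUnit_det _).mpr
      (Matrix.isUnit_det_of_right_inverse (B := Matrix.diagonal (fun i => Real.sqrt (d i))) ?_)
    unfold D
    rw [Matrix.diagonal_mul_diagonal]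
    rw [show (fun i => 1 / Real.sqrt (d i) * Real.sqrt (d i)) = fun _ => (1:ℝ) by
      ext i
      field_simp
      exact div_self (hsqrt_pos i).ne']
    exact Matrix.diagonal_one
  -- the block-diagonal scaling matrix
  set Dm : Matrix (Fin N ⊕ Fin N) (Fin N ⊕ Fin N) ℝ := Matrix.fromBlocks D 0 0 D with hDm
  have hDmunit : IsUnit Dm := by
    refine (Matrix.isUnit_iff_isUnit_det _).mpr (Matrix.isUnit_det_of_right_inverse
      (B := Matrix.fromBlocks (Matrix.diagonal (fun i => Real.sqrt (d i))) 0 0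
        (Matrix.diagonal (fun i => Real.sqrt (d i)))) ?_)
    unfold Dm D
    rw [Matrix.fromBlocks_multiply]
    simp only [Matrix.mul_zero, Matrix.zero_mul, add_zero, zero_add,
      Matrix.diagonal_mul_diagonal]
    rw [show (fun i => 1 / Real.sqrt (d i) * Real.sqrt (d i)) = fun _ => (1:ℝ) by
      ext i
      field_simp
      exact div_self (hsqrt_pos i).ne']
    rw [Matrix.diagonal_one, Matrix.fromBlocks_one]
  have hDmT : Dmᵀ = Dm := by
    unfold Dm
    rw [Matrix.fromBlocks_transpose, Matrix.diagonal_transpose, Matrix.transpose_zero]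
  -- key entry computations
  have hDVD : D * Matrix.diagonal d * D = 1 := by
    unfold D
    rw [Matrix.diagonal_mul_diagonal, Matrix.diagonal_mul_diagonal]
    rw [show (fun i => 1 / Real.sqrt (d i) * d i * (1 / Real.sqrt (d i))) = fun _ => (1:ℝ) by
      ext i
      have hs : Real.sqrt (d i) ≠ 0 := (hsqrt_pos i).ne'
      rw [← Real.mul_self_sqrt (hd i).le]
      field_simp
      rw [Real.sqrt_sq (Real.sqrt_nonneg _)]]
    exact Matrix.diagonal_one
  have hDBD : D * ((-(Δt/(2*ℏ))) • H) * D = (-(Δt/2)) • SigM := by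
    rw [Matrix.mul_smul, Matrix.smul_mul]
    unfold SigM
    rw [smul_smul]
    congr 1
    field_simp
  -- the probability matrix
  set P : Matrix (Fin N ⊕ Fin N) (Fin N ⊕ Fin N) ℝ :=
    Matrix.fromBlocks (Matrix.diagonal d) (-(Δt/(2*ℏ)) • H)
      (-(Δt/(2*ℏ)) • H) (Matrix.diagonal d) with hP
  set b : Matrix (Fin N) (Fin N) ℝ := (-(Δt/2)) • SigM with hb
  -- congruence by Dm
  have step1 : P.PosDef ↔ (Matrix.fromBlocks 1 b b 1 : Matrix (Fin N ⊕ Fin N) (Fin N ⊕ Fin N) ℝ).PosDef := by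
    rw [← aux_conj_posDef_iff P Dm hDmunit, hDmT]
    have : Dm * P * Dm = Matrix.fromBlocks 1 b b 1 := by
      unfold Dm P
      rw [Matrix.fromBlocks_multiply, Matrix.fromBlocks_multiply]
      simp only [Matrix.mul_zero, Matrix.zero_mul, add_zero, zero_add]
      rw [Matrix.mul_assoc, ← Matrix.mul_assoc D (Matrix.diagonal d) D, hDVD]
      rw [Matrix.mul_assoc, ← Matrix.mul_assoc D (-(Δt/(2*ℏ)) • H) D, hDBD]
    rw [this]
  -- congruence by T
  set T : Matrix (Fin N ⊕ Fin N) (Fin N ⊕ Fin N) ℝ := Matrix.fromBlocks 1 1 1 (-1) with hT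
  have hTT : T * T = (2:ℝ) • 1 := by
    unfold T
    rw [Matrix.fromBlocks_multiply, ← Matrix.fromBlocks_one, Matrix.fromBlocks_smul,
      Matrix.fromBlocks_inj]
    refine ⟨?_, ?_, ?_, ?_⟩ <;>
      simp only [Matrix.mul_one, Matrix.one_mul, Matrix.mul_neg, Matrix.neg_mul, neg_neg,
        smul_zero] <;>
      module
  have hTunit : IsUnit T := by
    refine (Matrix.isUnit_iff_isUnit_det _).mpr
      (Matrix.isUnit_det_of_right_inverse (B := (2⁻¹ : ℝ) • T) ?_)
    rw [Matrix.mul_smul, hTT, smul_smul]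
    norm_num
  have hTtrans : Tᵀ = T := by
    unfold T
    rw [Matrix.fromBlocks_transpose]
    simp
  have step2 : (Matrix.fromBlocks 1 b b 1 : Matrix (Fin N ⊕ Fin N) (Fin N ⊕ Fin N) ℝ).PosDef
      ↔ (Matrix.fromBlocks ((2:ℝ) • 1 + (-Δt) • SigM) 0 0
          ((2:ℝ) • 1 + Δt • SigM) : Matrix (Fin N ⊕ Fin N) (Fin N ⊕ Fin N) ℝ).PosDef := by
    rw [← aux_conj_posDef_iff (Matrix.fromBlocks 1 b b 1) T hTunit, hTtrans]
    have : T * (Matrix.fromBlocks 1 b b 1) * T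
        = Matrix.fromBlocks ((2:ℝ) • 1 + (-Δt) • SigM) 0 0 ((2:ℝ) • 1 + Δt • SigM) := by
      unfold T b
      rw [Matrix.fromBlocks_multiply, Matrix.fromBlocks_multiply, Matrix.fromBlocks_inj]
      refine ⟨?_, ?_, ?_, ?_⟩ <;>
        simp only [Matrix.one_mul, Matrix.mul_one, Matrix.neg_mul, Matrix.mul_neg,
          neg_neg] <;>
        module
    rw [this]
  rw [step1, step2, aux_fromBlocks_posDef_iff,
    aux_shift_posDef_iff SigM hSigherm 2 (-Δt), aux_shift_posDef_iff SigM hSigherm 2 Δt]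
  constructor
  · rintro ⟨h1, h2⟩ μ hμ
    have ha := h1 μ hμ
    have hb2 := h2 μ hμ
    rcases abs_cases μ with ⟨he, _⟩ | ⟨he, _⟩ <;> rw [he] <;> nlinarith
  · intro h
    refine ⟨fun μ hμ => ?_, fun μ hμ => ?_⟩ <;> have := h μ hμ
    · nlinarith [le_abs_self μ]
    · nlinarith [neg_abs_le μ]
end

section
/- (Theorem 1, probability conservation.) Assume the abstract FDTD-Q region setup, and assume additionally that every eigenvalue μ ∈ spectrum ℝ Σ of the symmetric matrix Σ := (1/ℏ) • (D * H * D), where D := Matrix.diagonal (fun i => 1/Real.sqrt (d i)), satisfies Δt * |μ| < 2 (the generalized CFL condition). Then: (i) P n ≥ 0 for all n : ℕ; and (ii) P (n+1) - P n = -Δt * IP n for all n : ℕ. -/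
open Matrix

theorem fdtdq_quad_nonneg {N : ℕ} (Δt : ℝ) (hΔt : 0 ≤ Δt)
    (Sm : Matrix (Fin N) (Fin N) ℝ)
    (hS : Sm.IsHermitian) (hCFL : ∀ μ ∈ spectrum ℝ Sm, Δt * |μ| < 2)
    (u v : Fin N → ℝ) :
    0 ≤ u ⬝ᵥ u + v ⬝ᵥ v - Δt * (v ⬝ᵥ Sm.mulVec u) := by
  set U : Matrix (Fin N) (Fin N) ℝ := (hS.eigenvectorUnitary : Matrix (Fin N) (Fin N) ℝ) with hU
  have hspec : Sm = U * diagonal hS.eigenvalues * star U := by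
    simpa using hS.spectral_theorem
  have hU1 : U * star U = 1 := (Matrix.mem_unitaryGroup_iff).mp hS.eigenvectorUnitary.2
  set a : Fin N → ℝ := (star U).mulVec u with ha
  set b : Fin N → ℝ := (star U).mulVec v with hb
  have hstarT : star U = Uᵀ := by
    ext i j; simp [Matrix.star_apply]
  have hnorm : ∀ w : Fin N → ℝ, ((star U).mulVec w) ⬝ᵥ ((star U).mulVec w) = w ⬝ᵥ w := by
    intro w
    rw [Matrix.dotProduct_mulVec, hstarT, ← Matrix.mulVec_transpose, Matrix.transpose_transpose,
      Matrix.mulVec_mulVec, ← hstarT, hU1, Matrix.one_mulVec]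
  have hdot : v ⬝ᵥ Sm.mulVec u = b ⬝ᵥ (diagonal hS.eigenvalues).mulVec a := by
    conv_lhs => rw [hspec]
    rw [← Matrix.mulVec_mulVec, ← Matrix.mulVec_mulVec, Matrix.dotProduct_mulVec,
      ← Matrix.mulVec_transpose, ← hstarT, ha, hb]
  have hsum : b ⬝ᵥ (diagonal hS.eigenvalues).mulVec a
      = ∑ i, hS.eigenvalues i * a i * b i := by
    simp [dotProduct, Matrix.mulVec_diagonal, mul_comm, mul_assoc, mul_left_comm]
  rw [hdot, hsum, ← hnorm u, ← hnorm v, ← ha, ← hb]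
  have h1 : ∀ w : Fin N → ℝ, w ⬝ᵥ w = ∑ i, w i * w i := fun w => rfl
  rw [h1 a, h1 b, Finset.mul_sum, ← Finset.sum_add_distrib, ← Finset.sum_sub_distrib]
  apply Finset.sum_nonneg
  intro i _
  have hc := hCFL (hS.eigenvalues i) (hS.eigenvalues_mem_spectrum_real i)
  have habs : |Δt * hS.eigenvalues i| < 2 := by
    rw [abs_mul, abs_of_nonneg hΔt]; exact hc
  rcases abs_lt.mp habs with ⟨hl, hr⟩
  nlinarith [sq_nonneg (a i - b i), sq_nonneg (a i + b i)]

theorem fdtdq_symm_dot {N : ℕ} (A : Matrix (Fin N) (Fin N) ℝ) (h : Aᵀ = A)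
    (x y : Fin N → ℝ) : x ⬝ᵥ A.mulVec y = y ⬝ᵥ A.mulVec x := by
  rw [Matrix.dotProduct_mulVec, ← Matrix.mulVec_transpose, h, dotProduct_comm]

/-- Theorem 1 of the paper (probability conservation): under the generalized CFL
condition, the total probability `P` is nonnegative and its rate of change equals
minus the outward probability current `IP`. -/
theorem fdtdq_probability_conservation
    (N M : ℕ) (ℏ Δt : ℝ) (hℏ : 0 < ℏ) (hΔt : 0 < Δt)
    (H : Matrix (Fin N) (Fin N) ℝ) (hH : Hᵀ = H)
    (Hb : Matrix (Fin N) (Fin M) ℝ)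
    (d : Fin N → ℝ) (hd : ∀ i, 0 < d i)
    (ψR ψI : ℕ → (Fin N → ℝ)) (gR gI : ℕ → (Fin M → ℝ))
    (hUpdA : ∀ n : ℕ, ℏ • (Matrix.diagonal d).mulVec (ψR (n+1) - ψR n)
        = Δt • (H.mulVec (ψI (n+1)) - Hb.mulVec (gI n)))
    (hUpdB : ∀ n : ℕ, ℏ • (Matrix.diagonal d).mulVec (ψI (n+1) - ψI n)
        = Δt • (-(H.mulVec (ψR n)) + Hb.mulVec (gR n)))
    (hCFL : ∀ μ ∈ spectrum ℝ
        ((1/ℏ) • (Matrix.diagonal (fun i => 1 / Real.sqrt (d i)) * H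
          * Matrix.diagonal (fun i => 1 / Real.sqrt (d i)))),
        Δt * |μ| < 2)
    (P : ℕ → ℝ)
    (hP : ∀ n : ℕ, P n = ψR n ⬝ᵥ (Matrix.diagonal d).mulVec (ψR n)
        + ψI n ⬝ᵥ (Matrix.diagonal d).mulVec (ψI n)
        - (Δt/ℏ) * (ψI n ⬝ᵥ H.mulVec (ψR n)))
    (IP : ℕ → ℝ)
    (hIP : ∀ n : ℕ, IP n = (2/ℏ) * (((ψR (n+1) + ψR n)/2) ⬝ᵥ Hb.mulVec (gI n)
        - ((ψI (n+1) + ψI n)/2) ⬝ᵥ Hb.mulVec (gR n))) :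
    (∀ n : ℕ, 0 ≤ P n) ∧ (∀ n : ℕ, P (n+1) - P n = -Δt * IP n) := by
  have hVsym : (Matrix.diagonal d)ᵀ = Matrix.diagonal d := Matrix.diagonal_transpose d
  constructor
  · -- nonnegativity
    intro n
    set D : Matrix (Fin N) (Fin N) ℝ := Matrix.diagonal (fun i => 1 / Real.sqrt (d i)) with hD
    set Sm : Matrix (Fin N) (Fin N) ℝ := (1/ℏ) • (D * H * D) with hSm
    have hsne : ∀ i, Real.sqrt (d i) ≠ 0 := fun i => ne_of_gt (Real.sqrt_pos.mpr (hd i))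
    have hS : Sm.IsHermitian := by
      rw [Matrix.IsHermitian, conjTranspose_eq_transpose_of_trivial, hSm, Matrix.transpose_smul,
        Matrix.transpose_mul, Matrix.transpose_mul]
      simp [hD, Matrix.diagonal_transpose, hH, Matrix.mul_assoc]
    set u : Fin N → ℝ := fun i => Real.sqrt (d i) * ψR n i with hu
    set v : Fin N → ℝ := fun i => Real.sqrt (d i) * ψI n i with hv
    have hDu : D.mulVec u = ψR n := by
      funext i
      simp only [hD, Matrix.mulVec_diagonal, hu]
      field_simp
      exact mul_div_cancel_left₀ _ (hsne i)
    have hDv : D.mulVec v = ψI n := by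
      funext i
      simp only [hD, Matrix.mulVec_diagonal, hv]
      field_simp
      exact mul_div_cancel_left₀ _ (hsne i)
    have h1 : ψR n ⬝ᵥ (Matrix.diagonal d).mulVec (ψR n) = u ⬝ᵥ u := by
      simp only [dotProduct, Matrix.mulVec_diagonal, hu]
      refine Finset.sum_congr rfl fun i _ => ?_
      ring_nf
      rw [Real.sq_sqrt (hd i).le]
    have h1' : ψI n ⬝ᵥ (Matrix.diagonal d).mulVec (ψI n) = v ⬝ᵥ v := by
      simp only [dotProduct, Matrix.mulVec_diagonal, hv]
      refine Finset.sum_congr rfl fun i _ => ?_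
      ring_nf
      rw [Real.sq_sqrt (hd i).le]
    have hDsym : Dᵀ = D := by rw [hD]; exact Matrix.diagonal_transpose _
    have h2 : ψI n ⬝ᵥ H.mulVec (ψR n) = ℏ * (v ⬝ᵥ Sm.mulVec u) := by
      have hSm' : (ℏ:ℝ) • Sm = D * H * D := by
        rw [hSm, smul_smul, mul_one_div_cancel (ne_of_gt hℏ), one_smul]
      have : v ⬝ᵥ (D * H * D).mulVec u = ψI n ⬝ᵥ H.mulVec (ψR n) := by
        rw [← Matrix.mulVec_mulVec, ← Matrix.mulVec_mulVec, fdtdq_symm_dot D hDsym,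
          hDv, hDu]
        exact dotProduct_comm _ _
      rw [← this, ← hSm', Matrix.smul_mulVec, dotProduct_smul, smul_eq_mul]
    rw [hP n, h1, h1', h2]
    have hq := fdtdq_quad_nonneg Δt hΔt.le Sm hS hCFL u v
    have : (Δt/ℏ) * (ℏ * (v ⬝ᵥ Sm.mulVec u)) = Δt * (v ⬝ᵥ Sm.mulVec u) := by
      field_simp
    rw [this]; exact hq
  · -- conservation law
    intro n
    have hsymH := fdtdq_symm_dot H hH
    have hsymV := fdtdq_symm_dot (Matrix.diagonal d) hVsym
    have keyA : ∀ x : Fin N → ℝ,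
        x ⬝ᵥ (Matrix.diagonal d).mulVec (ψR (n+1) - ψR n)
          = (Δt/ℏ) * (x ⬝ᵥ (H.mulVec (ψI (n+1)) - Hb.mulVec (gI n))) := by
      intro x
      have h := congrArg (fun w => x ⬝ᵥ w) (hUpdA n)
      simp only [dotProduct_smul, smul_eq_mul] at h
      rw [div_mul_eq_mul_div, eq_div_iff (ne_of_gt hℏ)]
      linarith [h]
    have keyB : ∀ x : Fin N → ℝ,
        x ⬝ᵥ (Matrix.diagonal d).mulVec (ψI (n+1) - ψI n)
          = (Δt/ℏ) * (x ⬝ᵥ (-(H.mulVec (ψR n)) + Hb.mulVec (gR n))) := by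
      intro x
      have h := congrArg (fun w => x ⬝ᵥ w) (hUpdB n)
      simp only [dotProduct_smul, smul_eq_mul] at h
      rw [div_mul_eq_mul_div, eq_div_iff (ne_of_gt hℏ)]
      linarith [h]
    have eA := keyA (ψR (n+1) + ψR n)
    have eB := keyB (ψI (n+1) + ψI n)
    have hdiv : ∀ (x : Fin N → ℝ) (w : Fin N → ℝ), (x/2) ⬝ᵥ w = (x ⬝ᵥ w)/2 := by
      intro x w
      simp [dotProduct, Finset.sum_div, div_mul_eq_mul_div]
    rw [hP (n+1), hP n, hIP n, hdiv, hdiv]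
    simp only [Matrix.mulVec_sub, Matrix.mulVec_add, Matrix.mulVec_neg, dotProduct_sub,
      dotProduct_add, dotProduct_neg, add_dotProduct, sub_dotProduct, neg_dotProduct] at eA eB ⊢
    linear_combination eA + eB - hsymV (ψR n) (ψR (n+1)) - hsymV (ψI n) (ψI (n+1))
      - (Δt/ℏ) * hsymH (ψI (n+1)) (ψR (n+1)) + (Δt/ℏ) * hsymH (ψR n) (ψI (n+1))
end

section
/- (Equation (28) of the paper, connection of the total probability to the Visscher staggered expression.) Assume the abstract FDTD-Q region setup (only update (UpdB) is used). Then for all n : ℕ, P n = ψR n ⬝ᵥ V.mulVec (ψR n) + ψI n ⬝ᵥ V.mulVec (ψI (n+1)) - (Δt/ℏ) * (ψI n ⬝ᵥ H⊥.mulVec (gR n)). In particular, when H⊥.mulVec (gR n) = 0 the total probability equals the staggered Visscher-type expression ψR n ⬝ᵥ V.mulVec (ψR n) + ψI n ⬝ᵥ V.mulVec (ψI (n+1)). -/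
open Matrix

/-- Equation (28) of the paper: the total probability `P n` can be rewritten using
the staggered (Visscher-type) combination of samples plus a boundary correction term;
in particular, when the boundary term vanishes it equals the staggered expression. -/
theorem fdtdq_probability_staggered_form
    (N M : ℕ) (ℏ Δt : ℝ) (hℏ : 0 < ℏ) (hΔt : 0 < Δt)
    (H : Matrix (Fin N) (Fin N) ℝ) (hH : Hᵀ = H)
    (Hb : Matrix (Fin N) (Fin M) ℝ)
    (d : Fin N → ℝ) (hd : ∀ i, 0 < d i)
    (ψR ψI : ℕ → (Fin N → ℝ)) (gR gI : ℕ → (Fin M → ℝ))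
    (hUpdA : ∀ n : ℕ, ℏ • (Matrix.diagonal d).mulVec (ψR (n+1) - ψR n)
        = Δt • (H.mulVec (ψI (n+1)) - Hb.mulVec (gI n)))
    (hUpdB : ∀ n : ℕ, ℏ • (Matrix.diagonal d).mulVec (ψI (n+1) - ψI n)
        = Δt • (-(H.mulVec (ψR n)) + Hb.mulVec (gR n)))
    (P : ℕ → ℝ)
    (hP : ∀ n : ℕ, P n = ψR n ⬝ᵥ (Matrix.diagonal d).mulVec (ψR n)
        + ψI n ⬝ᵥ (Matrix.diagonal d).mulVec (ψI n)
        - (Δt/ℏ) * (ψI n ⬝ᵥ H.mulVec (ψR n))) :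
    (∀ n : ℕ, P n = ψR n ⬝ᵥ (Matrix.diagonal d).mulVec (ψR n)
        + ψI n ⬝ᵥ (Matrix.diagonal d).mulVec (ψI (n+1))
        - (Δt/ℏ) * (ψI n ⬝ᵥ Hb.mulVec (gR n)))
    ∧ (∀ n : ℕ, Hb.mulVec (gR n) = 0 →
        P n = ψR n ⬝ᵥ (Matrix.diagonal d).mulVec (ψR n)
          + ψI n ⬝ᵥ (Matrix.diagonal d).mulVec (ψI (n+1))) := by
  have key : ∀ n : ℕ, P n = ψR n ⬝ᵥ (Matrix.diagonal d).mulVec (ψR n)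
      + ψI n ⬝ᵥ (Matrix.diagonal d).mulVec (ψI (n+1))
      - (Δt/ℏ) * (ψI n ⬝ᵥ Hb.mulVec (gR n)) := by
    intro n
    have h := congrArg (fun v => ψI n ⬝ᵥ v) (hUpdB n)
    simp only [Matrix.mulVec_sub, dotProduct_smul, dotProduct_sub, dotProduct_add,
      dotProduct_neg, smul_eq_mul] at h
    rw [hP n]
    have hℏ' : ℏ ≠ 0 := ne_of_gt hℏ
    field_simp at h ⊢
    nlinarith [h]
  refine ⟨key, fun n h0 => ?_⟩
  rw [key n, h0]
  simp
end

section
/- (Theorem 3, energy balance, eq. (41).) Assume the abstract FDTD-Q region setup. Then for all n ≥ 1, ℋ (n+1) - ℋ n = Δt * s n, i.e., the rate of change of the total energy equals the power supplied through the boundary. -/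
open Matrix

/-- Theorem 3 of the paper, energy balance (eq. (41)): for `n ≥ 1`, the rate of
change of the total energy `En` equals the power `s` supplied through the boundary. -/
theorem fdtdq_energy_balance
    (N M : ℕ) (ℏ Δt : ℝ) (hℏ : 0 < ℏ) (hΔt : 0 < Δt)
    (H : Matrix (Fin N) (Fin N) ℝ) (hH : Hᵀ = H)
    (Hb : Matrix (Fin N) (Fin M) ℝ)
    (d : Fin N → ℝ) (hd : ∀ i, 0 < d i)
    (ψR ψI : ℕ → (Fin N → ℝ)) (gR gI : ℕ → (Fin M → ℝ))
    (hUpdA : ∀ n : ℕ, ℏ • (Matrix.diagonal d).mulVec (ψR (n+1) - ψR n)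
        = Δt • (H.mulVec (ψI (n+1)) - Hb.mulVec (gI n)))
    (hUpdB : ∀ n : ℕ, ℏ • (Matrix.diagonal d).mulVec (ψI (n+1) - ψI n)
        = Δt • (-(H.mulVec (ψR n)) + Hb.mulVec (gR n)))
    (En : ℕ → ℝ)
    (hEn : ∀ n : ℕ, 1 ≤ n → En n = ψR n ⬝ᵥ H.mulVec (ψR n)
        + ψI n ⬝ᵥ H.mulVec (ψI n)
        + (ℏ/Δt) * ((ψR n - ψR (n-1)) ⬝ᵥ (Matrix.diagonal d).mulVec (ψI (n+1) - ψI n)))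
    (s : ℕ → ℝ)
    (hs : ∀ n : ℕ, 1 ≤ n →
        s n = (1/Δt) * ((ψR (n+1) - ψR n) ⬝ᵥ Hb.mulVec (gR (n+1) + gR n))
          + (1/Δt) * ((ψI (n+1) - ψI n) ⬝ᵥ Hb.mulVec (gI n + gI (n-1)))) :
    ∀ n : ℕ, 1 ≤ n → En (n+1) - En n = Δt * s n := by
  intro n hn
  obtain ⟨m, rfl⟩ : ∃ m, n = m + 1 := ⟨n - 1, by omega⟩
  have symH : ∀ x y : Fin N → ℝ, x ⬝ᵥ H.mulVec y = y ⬝ᵥ H.mulVec x := by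
    intro x y
    rw [dotProduct_mulVec, dotProduct_comm, ← mulVec_transpose, hH]
  have symV : ∀ x y : Fin N → ℝ,
      x ⬝ᵥ (Matrix.diagonal d).mulVec y = y ⬝ᵥ (Matrix.diagonal d).mulVec x := by
    intro x y
    rw [dotProduct_mulVec, dotProduct_comm, ← mulVec_transpose, Matrix.diagonal_transpose]
  have EA : ∀ (x : Fin N → ℝ) (k : ℕ),
      ℏ * (x ⬝ᵥ (Matrix.diagonal d).mulVec (ψR (k+1)))
        - ℏ * (x ⬝ᵥ (Matrix.diagonal d).mulVec (ψR k))
      = Δt * (x ⬝ᵥ H.mulVec (ψI (k+1))) - Δt * (x ⬝ᵥ Hb.mulVec (gI k)) := by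
    intro x k
    have h := congrArg (fun v => x ⬝ᵥ v) (hUpdA k)
    simp only [mulVec_sub, smul_sub, dotProduct_sub, dotProduct_smul, smul_eq_mul] at h
    linarith [h]
  have EB : ∀ (x : Fin N → ℝ) (k : ℕ),
      ℏ * (x ⬝ᵥ (Matrix.diagonal d).mulVec (ψI (k+1)))
        - ℏ * (x ⬝ᵥ (Matrix.diagonal d).mulVec (ψI k))
      = -(Δt * (x ⬝ᵥ H.mulVec (ψR k))) + Δt * (x ⬝ᵥ Hb.mulVec (gR k)) := by
    intro x k
    have h := congrArg (fun v => x ⬝ᵥ v) (hUpdB k)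
    simp only [mulVec_sub, smul_sub, smul_add, dotProduct_sub, dotProduct_add,
      dotProduct_smul, dotProduct_neg, smul_eq_mul, mul_neg] at h
    linarith [h]
  rw [hEn (m+1+1) (by omega), hEn (m+1) (by omega), hs (m+1) (by omega)]
  simp only [Nat.add_sub_cancel]
  simp only [mulVec_add, mulVec_sub, dotProduct_add, dotProduct_sub, sub_dotProduct,
    add_dotProduct, dotProduct_smul, smul_eq_mul]
  have hΔt' : Δt ≠ 0 := ne_of_gt hΔt
  field_simp
  linear_combination
    Δt * symH (ψR (m+1)) (ψR (m+2)) + Δt * symH (ψI (m+1)) (ψI (m+2))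
    + (EB (ψR (m+2)) (m+2) - EB (ψR (m+1)) (m+2)
        + EB (ψR (m+2)) (m+1) - EB (ψR (m+1)) (m+1)
        - EA (ψI (m+2)) (m+1) + EA (ψI (m+1)) (m+1)
        - EA (ψI (m+2)) m + EA (ψI (m+1)) m)
    + ℏ * (symV (ψI (m+2)) (ψR (m+2)) - symV (ψI (m+1)) (ψR (m+2))
        - symV (ψI (m+2)) (ψR m) + symV (ψI (m+1)) (ψR m))
end

section
/- (Theorem 3, energy lower bound, eq. (40).) Assume the abstract FDTD-Q region setup with N ≥ 1, and additionally: the block matrix 𝒫 := Matrix.fromBlocks V (-(Δt/(2*ℏ)) • H) (-(Δt/(2*ℏ)) • H) V is positive definite, with smallest eigenvalue λmin > 0; there is v > 0 with d i ≤ v for all i; H = K + V * Matrix.diagonal Upot for some symmetric positive semidefinite matrix K and some Upot : Fin N → ℝ; and there is Pmax : ℝ such that for all n, Sum.elim (ψR n) (ψI n) ⬝ᵥ 𝒫.mulVec (Sum.elim (ψR n) (ψI n)) ≤ Pmax. Let Umin be the minimum of Upot over Fin N. Then for all n ≥ 1: ℋ n ≥ v * (Pmax / λmin) * (min Umin 0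 - 4*ℏ/Δt). -/
open Matrix

/-- Theorem 3 of the paper, energy lower bound (eq. (40)): if the probability
matrix `𝒫` is positive definite with smallest eigenvalue `lmin > 0`, the
secondary-cell volumes are bounded by `v`, the Hamiltonian matrix splits as a
positive-semidefinite stiffness part plus the potential part, and the total
probability quadratic form is bounded by `Pmax`, then the total energy `En n`
is bounded below as in eq. (40). -/
theorem fdtdq_energy_lower_bound
    (N M : ℕ) (hN : 0 < N) (ℏ Δt : ℝ) (hℏ : 0 < ℏ) (hΔt : 0 < Δt)
    (H : Matrix (Fin N) (Fin N) ℝ) (hH : Hᵀ = H)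
    (Hb : Matrix (Fin N) (Fin M) ℝ)
    (d : Fin N → ℝ) (hd : ∀ i, 0 < d i)
    (ψR ψI : ℕ → (Fin N → ℝ)) (gR gI : ℕ → (Fin M → ℝ))
    (hUpdA : ∀ n : ℕ, ℏ • (Matrix.diagonal d).mulVec (ψR (n+1) - ψR n)
        = Δt • (H.mulVec (ψI (n+1)) - Hb.mulVec (gI n)))
    (hUpdB : ∀ n : ℕ, ℏ • (Matrix.diagonal d).mulVec (ψI (n+1) - ψI n)
        = Δt • (-(H.mulVec (ψR n)) + Hb.mulVec (gR n)))
    (Pmat : Matrix (Fin N ⊕ Fin N) (Fin N ⊕ Fin N) ℝ)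
    (hPmat : Pmat = Matrix.fromBlocks (Matrix.diagonal d) (-(Δt/(2*ℏ)) • H)
        (-(Δt/(2*ℏ)) • H) (Matrix.diagonal d))
    (hPD : Pmat.PosDef)
    (lmin : ℝ) (hlmin : lmin = sInf (spectrum ℝ Pmat)) (hlpos : 0 < lmin)
    (v : ℝ) (hv : 0 < v) (hdv : ∀ i, d i ≤ v)
    (K : Matrix (Fin N) (Fin N) ℝ) (hK : K.PosSemidef)
    (Upot : Fin N → ℝ)
    (hHdec : H = K + Matrix.diagonal d * Matrix.diagonal Upot)
    (Pmax : ℝ)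
    (hPmax : ∀ n : ℕ,
        Sum.elim (ψR n) (ψI n) ⬝ᵥ Pmat.mulVec (Sum.elim (ψR n) (ψI n)) ≤ Pmax)
    (En : ℕ → ℝ)
    (hEn : ∀ n : ℕ, 1 ≤ n → En n = ψR n ⬝ᵥ H.mulVec (ψR n)
        + ψI n ⬝ᵥ H.mulVec (ψI n)
        + (ℏ/Δt) * ((ψR n - ψR (n-1)) ⬝ᵥ (Matrix.diagonal d).mulVec (ψI (n+1) - ψI n))) :
    ∀ n : ℕ, 1 ≤ n →
      En n ≥ v * (Pmax / lmin)
        * (min (Finset.univ.inf' ⟨⟨0, hN⟩, Finset.mem_univ _⟩ Upot) 0 - 4*ℏ/Δt) := by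
  classical
  -- Rayleigh bound: lmin * ‖x‖² ≤ xᵀ P x
  have hbdd : BddBelow (spectrum ℝ Pmat) := (Matrix.finite_spectrum Pmat).bddBelow
  have hQherm : (Pmat - algebraMap ℝ _ lmin).IsHermitian := by
    rw [Algebra.algebraMap_eq_smul_one]
    exact hPD.1.sub (by simp [Matrix.IsHermitian])
  have hQps : (Pmat - algebraMap ℝ _ lmin).PosSemidef := by
    refine hQherm.posSemidef_iff_eigenvalues_nonneg.mpr (Pi.le_def.mpr fun i => show (0:ℝ) ≤ _ from ?_)
    have hm := hQherm.eigenvalues_mem_spectrum_real i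
    rw [← spectrum.sub_singleton_eq] at hm
    obtain ⟨μ, hμ, y, hy, hxy⟩ := Set.mem_sub.mp hm
    rw [Set.mem_singleton_iff] at hy
    subst hy
    rw [← hxy]
    have := csInf_le hbdd hμ
    rw [← hlmin] at this
    linarith
  have hkey : ∀ x : Fin N ⊕ Fin N → ℝ, lmin * (x ⬝ᵥ x) ≤ x ⬝ᵥ Pmat.mulVec x := by
    intro x
    have h0 := hQps.dotProduct_mulVec_nonneg x
    rw [star_trivial] at h0
    rw [Algebra.algebraMap_eq_smul_one, Matrix.sub_mulVec, Matrix.smul_mulVec,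
      Matrix.one_mulVec, dotProduct_sub, dotProduct_smul, smul_eq_mul] at h0
    linarith
  -- probability bound per time step
  set P : ℝ := Pmax / lmin with hP
  have hsum : ∀ n : ℕ, ψR n ⬝ᵥ ψR n + ψI n ⬝ᵥ ψI n ≤ P := by
    intro n
    have h1 := hkey (Sum.elim (ψR n) (ψI n))
    have h2 := hPmax n
    have h3 : Sum.elim (ψR n) (ψI n) ⬝ᵥ Sum.elim (ψR n) (ψI n)
        = ψR n ⬝ᵥ ψR n + ψI n ⬝ᵥ ψI n := by
      simp [dotProduct, Fintype.sum_sum_type]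
    rw [h3] at h1
    rw [hP, le_div_iff₀ hlpos]
    nlinarith
  have hnn : ∀ x : Fin N → ℝ, 0 ≤ x ⬝ᵥ x := fun x =>
    Finset.sum_nonneg fun i _ => mul_self_nonneg _
  have hP0 : 0 ≤ P := le_trans (by have := hnn (ψR 0); have := hnn (ψI 0); linarith) (hsum 0)
  -- abbreviation for the potential minimum
  set U0 : ℝ := min (Finset.univ.inf' ⟨⟨0, hN⟩, Finset.mem_univ _⟩ Upot) 0 with hU0
  have hU0le : ∀ i, U0 ≤ Upot i := fun i =>
    le_trans (min_le_left _ _) (Finset.inf'_le _ (Finset.mem_univ i))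
  have hU0np : U0 ≤ 0 := min_le_right _ _
  -- lower bound for the H quadratic form
  have hHquad : ∀ x : Fin N → ℝ, U0 * v * (x ⬝ᵥ x) ≤ x ⬝ᵥ H.mulVec x := by
    intro x
    have hKx := hK.dotProduct_mulVec_nonneg x
    rw [star_trivial] at hKx
    have hdiag : x ⬝ᵥ (Matrix.diagonal d * Matrix.diagonal Upot).mulVec x
        = ∑ i, d i * Upot i * (x i * x i) := by
      rw [Matrix.diagonal_mul_diagonal]
      simp [dotProduct, Matrix.mulVec_diagonal, Pi.mul_apply]
      exact Finset.sum_congr rfl fun i _ => by ring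
    have hterm : ∀ i : Fin N, U0 * v * (x i * x i) ≤ d i * Upot i * (x i * x i) := by
      intro i
      have h1 := hd i
      have h2 := hdv i
      have h3 := hU0le i
      have h4 := mul_self_nonneg (x i)
      nlinarith [mul_nonneg h1.le h4, mul_nonneg (sub_nonneg.mpr h2) h4,
        mul_nonneg (mul_nonneg h1.le h4) (sub_nonneg.mpr h3)]
    calc U0 * v * (x ⬝ᵥ x) = ∑ i, U0 * v * (x i * x i) := by
          simp [dotProduct, Finset.mul_sum]
      _ ≤ ∑ i, d i * Upot i * (x i * x i) :=
          Finset.sum_le_sum fun i _ => hterm i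
      _ = x ⬝ᵥ (Matrix.diagonal d * Matrix.diagonal Upot).mulVec x := hdiag.symm
      _ ≤ x ⬝ᵥ H.mulVec x := by
          rw [hHdec, Matrix.add_mulVec, dotProduct_add]
          linarith
  -- lower bound for the cross term
  have hcross : ∀ a b : Fin N → ℝ,
      -((v/2) * (a ⬝ᵥ a + b ⬝ᵥ b)) ≤ a ⬝ᵥ (Matrix.diagonal d).mulVec b := by
    intro a b
    have hterm : ∀ i : Fin N, -((v/2) * (a i * a i + b i * b i)) ≤ a i * (d i * b i) := by
      intro i
      have h1 := hd i
      have h2 := hdv i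
      nlinarith [mul_nonneg h1.le (sq_nonneg (a i + b i)),
        mul_nonneg (sub_nonneg.mpr h2) (add_nonneg (mul_self_nonneg (a i)) (mul_self_nonneg (b i)))]
    calc -((v/2) * (a ⬝ᵥ a + b ⬝ᵥ b))
        = ∑ i, -((v/2) * (a i * a i + b i * b i)) := by
          simp [dotProduct, Finset.mul_sum, ← Finset.sum_add_distrib, ← Finset.sum_neg_distrib]
      _ ≤ ∑ i, a i * (d i * b i) := Finset.sum_le_sum fun i _ => hterm i
      _ = a ⬝ᵥ (Matrix.diagonal d).mulVec b := by
          simp [dotProduct, Matrix.mulVec_diagonal]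
  have hdiff : ∀ x y : Fin N → ℝ, (x - y) ⬝ᵥ (x - y) ≤ 2*(x ⬝ᵥ x) + 2*(y ⬝ᵥ y) := by
    intro x y
    have : ∀ i : Fin N, (x i - y i) * (x i - y i) ≤ 2*(x i * x i) + 2*(y i * y i) := by
      intro i; nlinarith [sq_nonneg (x i + y i)]
    calc (x - y) ⬝ᵥ (x - y) = ∑ i, (x i - y i) * (x i - y i) := by simp [dotProduct]
      _ ≤ ∑ i, (2*(x i * x i) + 2*(y i * y i)) := Finset.sum_le_sum fun i _ => this i
      _ = 2*(x ⬝ᵥ x) + 2*(y ⬝ᵥ y) := by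
          simp [dotProduct, Finset.mul_sum, Finset.sum_add_distrib]
  -- main estimate
  intro n hn
  rw [hEn n hn]
  set a := ψR n - ψR (n-1) with ha
  set b := ψI (n+1) - ψI n with hb
  have hA : U0 * v * (ψR n ⬝ᵥ ψR n) ≤ ψR n ⬝ᵥ H.mulVec (ψR n) := hHquad _
  have hB : U0 * v * (ψI n ⬝ᵥ ψI n) ≤ ψI n ⬝ᵥ H.mulVec (ψI n) := hHquad _
  have haa : a ⬝ᵥ a ≤ 2*(ψR n ⬝ᵥ ψR n) + 2*(ψR (n-1) ⬝ᵥ ψR (n-1)) := hdiff _ _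
  have hbb : b ⬝ᵥ b ≤ 2*(ψI (n+1) ⬝ᵥ ψI (n+1)) + 2*(ψI n ⬝ᵥ ψI n) := hdiff _ _
  have h1 := hsum n
  have h2 := hsum (n-1)
  have h3 := hsum (n+1)
  have hsum6 : a ⬝ᵥ a + b ⬝ᵥ b ≤ 6 * P := by
    have := hnn (ψI (n-1)); have := hnn (ψR (n+1)); linarith
  have hC : -((ℏ/Δt) * ((v/2) * (6*P))) ≤ (ℏ/Δt) * (a ⬝ᵥ (Matrix.diagonal d).mulVec b) := by
    have hpos : 0 < ℏ/Δt := div_pos hℏ hΔt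
    have hc1 := hcross a b
    have hc2 : -((v/2) * (6*P)) ≤ a ⬝ᵥ (Matrix.diagonal d).mulVec b := by
      have : (v/2) * (a ⬝ᵥ a + b ⬝ᵥ b) ≤ (v/2) * (6*P) :=
        mul_le_mul_of_nonneg_left hsum6 (by positivity)
      linarith
    calc -((ℏ/Δt) * ((v/2) * (6*P))) = (ℏ/Δt) * (-((v/2) * (6*P))) := by ring
      _ ≤ (ℏ/Δt) * (a ⬝ᵥ (Matrix.diagonal d).mulVec b) :=
          mul_le_mul_of_nonneg_left hc2 hpos.le
  have hAB : U0 * v * P ≤ U0 * v * (ψR n ⬝ᵥ ψR n) + U0 * v * (ψI n ⬝ᵥ ψI n) := by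
    have huv : U0 * v ≤ 0 := mul_nonpos_of_nonpos_of_nonneg hU0np hv.le
    nlinarith
  have hfin : 0 ≤ (ℏ/Δt) * v * P := by positivity
  have hexp : v * P * (U0 - 4*ℏ/Δt) = U0 * v * P - 4 * ((ℏ/Δt) * v * P) := by
    field_simp
  rw [ge_iff_le, hexp]
  nlinarith [hA, hB, hC, hAB, hfin]
end

section
/- (Equation (51) of the paper, rewriting of the total energy.) Assume the abstract FDTD-Q region setup (only update (UpdB) is used). Then for all n ≥ 1, ℋ n = ψR (n-1) ⬝ᵥ H.mulVec (ψR n) + ψI n ⬝ᵥ H.mulVec (ψI n) + (ψR n - ψR (n-1)) ⬝ᵥ H⊥.mulVec (gR n). In particular, when H⊥.mulVec (gR n) = 0 the total energy equals the staggered expression ψR (n-1) ⬝ᵥ H.mulVec (ψR n) + ψI n ⬝ᵥ H.mulVec (ψI n). -/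
open Matrix

/-- Equation (51) of the paper: for `n ≥ 1`, the total energy `En n` can be
rewritten using a staggered combination of samples plus a boundary term; in
particular, when the boundary term vanishes it equals the staggered expression. -/
theorem fdtdq_energy_staggered_form
    (N M : ℕ) (ℏ Δt : ℝ) (hℏ : 0 < ℏ) (hΔt : 0 < Δt)
    (H : Matrix (Fin N) (Fin N) ℝ) (hH : Hᵀ = H)
    (Hb : Matrix (Fin N) (Fin M) ℝ)
    (d : Fin N → ℝ) (hd : ∀ i, 0 < d i)
    (ψR ψI : ℕ → (Fin N → ℝ)) (gR gI : ℕ → (Fin M → ℝ))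
    (hUpdA : ∀ n : ℕ, ℏ • (Matrix.diagonal d).mulVec (ψR (n+1) - ψR n)
        = Δt • (H.mulVec (ψI (n+1)) - Hb.mulVec (gI n)))
    (hUpdB : ∀ n : ℕ, ℏ • (Matrix.diagonal d).mulVec (ψI (n+1) - ψI n)
        = Δt • (-(H.mulVec (ψR n)) + Hb.mulVec (gR n)))
    (En : ℕ → ℝ)
    (hEn : ∀ n : ℕ, 1 ≤ n → En n = ψR n ⬝ᵥ H.mulVec (ψR n)
        + ψI n ⬝ᵥ H.mulVec (ψI n)
        + (ℏ/Δt) * ((ψR n - ψR (n-1)) ⬝ᵥ (Matrix.diagonal d).mulVec (ψI (n+1) - ψI n))) :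
    (∀ n : ℕ, 1 ≤ n → En n = ψR (n-1) ⬝ᵥ H.mulVec (ψR n)
        + ψI n ⬝ᵥ H.mulVec (ψI n)
        + (ψR n - ψR (n-1)) ⬝ᵥ Hb.mulVec (gR n))
    ∧ (∀ n : ℕ, 1 ≤ n → Hb.mulVec (gR n) = 0 →
        En n = ψR (n-1) ⬝ᵥ H.mulVec (ψR n) + ψI n ⬝ᵥ H.mulVec (ψI n)) := by
  have main : ∀ n : ℕ, 1 ≤ n → En n = ψR (n-1) ⬝ᵥ H.mulVec (ψR n)
      + ψI n ⬝ᵥ H.mulVec (ψI n)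
      + (ψR n - ψR (n-1)) ⬝ᵥ Hb.mulVec (gR n) := by
    intro n hn
    have h1 := congrArg (fun v => (ψR n - ψR (n-1)) ⬝ᵥ v) (hUpdB n)
    simp only [dotProduct_smul, smul_eq_mul] at h1
    have h2 : (ℏ/Δt) * ((ψR n - ψR (n-1)) ⬝ᵥ (Matrix.diagonal d).mulVec (ψI (n+1) - ψI n))
        = (ψR n - ψR (n-1)) ⬝ᵥ (-(H.mulVec (ψR n)) + Hb.mulVec (gR n)) := by
      rw [div_mul_eq_mul_div, h1]
      exact mul_div_cancel_left₀ _ hΔt.ne'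
    rw [hEn n hn, h2]
    simp only [dotProduct_add, sub_dotProduct, dotProduct_neg]
    ring
  refine ⟨main, fun n hn h0 => ?_⟩
  rw [main n hn, h0]
  simp
end

section
/- (Lemma 3, stability of an isolated region.) Assume the abstract FDTD-Q region setup, that the block matrix 𝒫 := Matrix.fromBlocks V (-(Δt/(2*ℏ)) • H) (-(Δt/(2*ℏ)) • H) V is positive definite, and that IP n = 0 for all n : ℕ. Let λmin and λmax be the smallest and largest eigenvalues of the real symmetric matrix 𝒫 and let Ψ n := Sum.elim (ψR n) (ψI n) : Fin N ⊕ Fin N → ℝ. Then for all n : ℕ, ‖Ψ n‖ ≤ Real.sqrt (λmax/λmin) * ‖Ψ 0‖, where ‖·‖ is the Euclidean norm. -/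
open Matrix

lemma fdtdq_dot_symm {n : Type*} [Fintype n] (S : Matrix n n ℝ) (hS : Sᵀ = S) (x y : n → ℝ) :
    x ⬝ᵥ S *ᵥ y = y ⬝ᵥ S *ᵥ x := by
  rw [dotProduct_mulVec]
  nth_rewrite 1 [← hS]
  rw [vecMul_transpose, dotProduct_comm]

lemma fdtdq_half_dot {n : Type*} [Fintype n] (u v : n → ℝ) : (u/2) ⬝ᵥ v = (u ⬝ᵥ v) / 2 := by
  simp [dotProduct, Finset.sum_div, div_mul_eq_mul_div]

lemma fdtdq_norm_eq_sqrt_dot {n : Type*} [Fintype n] (v : n → ℝ) :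
    ‖(EuclideanSpace.equiv n ℝ).symm v‖ = Real.sqrt (v ⬝ᵥ v) := by
  rw [EuclideanSpace.norm_eq]
  congr 1
  simp [dotProduct, sq]

lemma fdtdq_rayleigh_bounds {n : Type*} [Fintype n] [DecidableEq n] (A : Matrix n n ℝ)
    (hA : A.IsHermitian) (x : n → ℝ) (lo hi : ℝ)
    (hlo : ∀ i, lo ≤ hA.eigenvalues i) (hhi : ∀ i, hA.eigenvalues i ≤ hi) :
    lo * (x ⬝ᵥ x) ≤ x ⬝ᵥ A *ᵥ x ∧ x ⬝ᵥ A *ᵥ x ≤ hi * (x ⬝ᵥ x) := by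
  classical
  set U : Matrix n n ℝ := (hA.eigenvectorUnitary : Matrix n n ℝ) with hU
  set y : n → ℝ := Uᵀ *ᵥ x with hy
  have hstar : star U = Uᵀ := by
    ext i j; simp [Matrix.star_apply]
  have hq : x ⬝ᵥ A *ᵥ x = ∑ i, hA.eigenvalues i * (y i)^2 := by
    conv_lhs => rw [hA.spectral_theorem, Unitary.conjStarAlgAut_apply]
    rw [← hU]
    rw [hstar, ← mulVec_mulVec, ← mulVec_mulVec, dotProduct_mulVec, ← mulVec_transpose]
    simp [dotProduct, mulVec_diagonal, hy]
    exact Finset.sum_congr rfl fun i _ => by ring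
  have hn : x ⬝ᵥ x = ∑ i, (y i)^2 := by
    have h1 : y ⬝ᵥ y = x ⬝ᵥ x := by
      rw [hy, dotProduct_mulVec, vecMul_transpose, mulVec_mulVec]
      have : U * Uᵀ = 1 := by
        rw [← hstar]; exact (Matrix.mem_unitaryGroup_iff).mp hA.eigenvectorUnitary.2
      rw [this, one_mulVec]
    rw [← h1]; simp [dotProduct, sq]
  constructor
  · rw [hq, hn, Finset.mul_sum]
    exact Finset.sum_le_sum fun i _ => mul_le_mul_of_nonneg_right (hlo i) (sq_nonneg _)
  · rw [hq, hn, Finset.mul_sum]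
    exact Finset.sum_le_sum fun i _ => mul_le_mul_of_nonneg_right (hhi i) (sq_nonneg _)

/-- Lemma 3 of the paper (stability of an isolated region): if the probability
matrix `𝒫` is positive definite and the outward probability current vanishes at
every step, then the Euclidean norm of the state vector `Ψ n = Sum.elim (ψR n) (ψI n)`
is bounded by `√(λmax/λmin) · ‖Ψ 0‖`, where `λmin`, `λmax` are the extreme
eigenvalues of `𝒫`. -/
theorem fdtdq_isolated_region_stability
    (N M : ℕ) (ℏ Δt : ℝ) (hℏ : 0 < ℏ) (hΔt : 0 < Δt)
    (H : Matrix (Fin N) (Fin N) ℝ) (hH : Hᵀ = H)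
    (Hb : Matrix (Fin N) (Fin M) ℝ)
    (d : Fin N → ℝ) (hd : ∀ i, 0 < d i)
    (ψR ψI : ℕ → (Fin N → ℝ)) (gR gI : ℕ → (Fin M → ℝ))
    (hUpdA : ∀ n : ℕ, ℏ • (Matrix.diagonal d).mulVec (ψR (n+1) - ψR n)
        = Δt • (H.mulVec (ψI (n+1)) - Hb.mulVec (gI n)))
    (hUpdB : ∀ n : ℕ, ℏ • (Matrix.diagonal d).mulVec (ψI (n+1) - ψI n)
        = Δt • (-(H.mulVec (ψR n)) + Hb.mulVec (gR n)))
    (Pmat : Matrix (Fin N ⊕ Fin N) (Fin N ⊕ Fin N) ℝ)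
    (hPmat : Pmat = Matrix.fromBlocks (Matrix.diagonal d) (-(Δt/(2*ℏ)) • H)
        (-(Δt/(2*ℏ)) • H) (Matrix.diagonal d))
    (hPD : Pmat.PosDef)
    (hIP : ∀ n : ℕ, (2/ℏ) * (((ψR (n+1) + ψR n)/2) ⬝ᵥ Hb.mulVec (gI n)
        - ((ψI (n+1) + ψI n)/2) ⬝ᵥ Hb.mulVec (gR n)) = 0) :
    ∀ n : ℕ,
      ‖(EuclideanSpace.equiv (Fin N ⊕ Fin N) ℝ).symm (Sum.elim (ψR n) (ψI n))‖
        ≤ Real.sqrt (sSup (spectrum ℝ Pmat) / sInf (spectrum ℝ Pmat))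
          * ‖(EuclideanSpace.equiv (Fin N ⊕ Fin N) ℝ).symm (Sum.elim (ψR 0) (ψI 0))‖ := by
  intro n
  by_cases hN : N = 0
  · subst hN
    rw [fdtdq_norm_eq_sqrt_dot, fdtdq_norm_eq_sqrt_dot]
    simp [dotProduct]
  -- quadratic form of Pmat on Sum.elim vectors
  have hQform : ∀ x y : Fin N → ℝ,
      Sum.elim x y ⬝ᵥ Pmat *ᵥ Sum.elim x y
        = x ⬝ᵥ (Matrix.diagonal d) *ᵥ x + y ⬝ᵥ (Matrix.diagonal d) *ᵥ y
          - (Δt/ℏ) * (x ⬝ᵥ H *ᵥ y) := by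
    intro x y
    have hsym : y ⬝ᵥ H *ᵥ x = x ⬝ᵥ H *ᵥ y := fdtdq_dot_symm H hH y x
    rw [hPmat, fromBlocks_mulVec, sumElim_dotProduct_sumElim]
    simp only [Matrix.smul_mulVec, dotProduct_add, dotProduct_smul, smul_eq_mul,
      Matrix.neg_mulVec, dotProduct_neg, neg_smul, neg_mul, Sum.elim_comp_inl, Sum.elim_comp_inr]
    rw [hsym]
    field_simp
    ring
  -- conservation of the discrete energy
  have hstep : ∀ m : ℕ,
      Sum.elim (ψR (m+1)) (ψI (m+1)) ⬝ᵥ Pmat *ᵥ Sum.elim (ψR (m+1)) (ψI (m+1))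
        = Sum.elim (ψR m) (ψI m) ⬝ᵥ Pmat *ᵥ Sum.elim (ψR m) (ψI m) := by
    intro m
    rw [hQform, hQform]
    have hVs : (Matrix.diagonal d)ᵀ = Matrix.diagonal d := Matrix.diagonal_transpose d
    have h1 := congrArg (fun v => (ψR (m+1) + ψR m) ⬝ᵥ v) (hUpdA m)
    have h2 := congrArg (fun v => (ψI (m+1) + ψI m) ⬝ᵥ v) (hUpdB m)
    simp only [dotProduct_smul, smul_eq_mul, Matrix.mulVec_sub, dotProduct_sub,
      add_dotProduct, dotProduct_add, dotProduct_neg] at h1 h2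
    rw [fdtdq_dot_symm (Matrix.diagonal d) hVs (ψR m) (ψR (m+1))] at h1
    rw [fdtdq_dot_symm (Matrix.diagonal d) hVs (ψI m) (ψI (m+1))] at h2
    have hs2 : ψI (m+1) ⬝ᵥ H *ᵥ ψR m = ψR m ⬝ᵥ H *ᵥ ψI (m+1) := fdtdq_dot_symm H hH _ _
    have hs4 : ψI m ⬝ᵥ H *ᵥ ψR m = ψR m ⬝ᵥ H *ᵥ ψI m := fdtdq_dot_symm H hH _ _
    have hip : ψR (m+1) ⬝ᵥ Hb *ᵥ gI m + ψR m ⬝ᵥ Hb *ᵥ gI m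
        = ψI (m+1) ⬝ᵥ Hb *ᵥ gR m + ψI m ⬝ᵥ Hb *ᵥ gR m := by
      have h := hIP m
      rw [fdtdq_half_dot, fdtdq_half_dot, add_dotProduct, add_dotProduct] at h
      have h2ℏ : (2/ℏ) ≠ 0 := by positivity
      rcases mul_eq_zero.mp h with h' | h'
      · exact absurd h' h2ℏ
      · linarith
    have h1' : ψR (m+1) ⬝ᵥ (Matrix.diagonal d) *ᵥ ψR (m+1) - ψR m ⬝ᵥ (Matrix.diagonal d) *ᵥ ψR m
        = Δt/ℏ * (ψR (m+1) ⬝ᵥ H *ᵥ ψI (m+1) + ψR m ⬝ᵥ H *ᵥ ψI (m+1)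
          - (ψR (m+1) ⬝ᵥ Hb *ᵥ gI m + ψR m ⬝ᵥ Hb *ᵥ gI m)) := by
      rw [div_mul_eq_mul_div, eq_div_iff hℏ.ne']
      linear_combination h1
    have h2' : ψI (m+1) ⬝ᵥ (Matrix.diagonal d) *ᵥ ψI (m+1) - ψI m ⬝ᵥ (Matrix.diagonal d) *ᵥ ψI m
        = Δt/ℏ * (-(ψR m ⬝ᵥ H *ᵥ ψI (m+1)) - ψR m ⬝ᵥ H *ᵥ ψI m
          + (ψI (m+1) ⬝ᵥ Hb *ᵥ gR m + ψI m ⬝ᵥ Hb *ᵥ gR m)) := by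
      rw [div_mul_eq_mul_div, eq_div_iff hℏ.ne']
      linear_combination h2 - Δt * hs2 - Δt * hs4
    linear_combination h1' + h2' - (Δt/ℏ) * hip
  have hcons : ∀ m : ℕ,
      Sum.elim (ψR m) (ψI m) ⬝ᵥ Pmat *ᵥ Sum.elim (ψR m) (ψI m)
        = Sum.elim (ψR 0) (ψI 0) ⬝ᵥ Pmat *ᵥ Sum.elim (ψR 0) (ψI 0) := by
    intro m
    induction m with
    | zero => rfl
    | succ k ih => rw [hstep k, ih]
  -- spectral bounds
  have hA : Pmat.IsHermitian := hPD.1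
  have hNpos : 0 < N := Nat.pos_of_ne_zero hN
  have : Nonempty (Fin N ⊕ Fin N) := ⟨Sum.inl ⟨0, hNpos⟩⟩
  have hspec : spectrum ℝ Pmat = Set.range hA.eigenvalues :=
    Matrix.IsHermitian.spectrum_real_eq_range_eigenvalues hA
  have hfin : (Set.range hA.eigenvalues).Finite := Set.finite_range _
  have hne : (Set.range hA.eigenvalues).Nonempty := Set.range_nonempty _
  have hlo : ∀ i, sInf (spectrum ℝ Pmat) ≤ hA.eigenvalues i := by
    intro i
    rw [hspec]
    exact csInf_le hfin.bddBelow ⟨i, rfl⟩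
  have hhi : ∀ i, hA.eigenvalues i ≤ sSup (spectrum ℝ Pmat) := by
    intro i
    rw [hspec]
    exact le_csSup hfin.bddAbove ⟨i, rfl⟩
  have hmin_mem : sInf (spectrum ℝ Pmat) ∈ Set.range hA.eigenvalues := by
    rw [← hspec] at hne ⊢
    exact hne.csInf_mem (hspec ▸ hfin)
  have hminpos : 0 < sInf (spectrum ℝ Pmat) := by
    obtain ⟨i, hi⟩ := hmin_mem
    rw [← hi]
    exact hPD.eigenvalues_pos i
  have hmaxnn : 0 ≤ sSup (spectrum ℝ Pmat) :=
    le_trans hminpos.le ((hlo (Classical.arbitrary _)).trans (hhi _))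
  -- Rayleigh bounds
  obtain ⟨hray1, _⟩ := fdtdq_rayleigh_bounds Pmat hA (Sum.elim (ψR n) (ψI n))
    (sInf (spectrum ℝ Pmat)) (sSup (spectrum ℝ Pmat)) hlo hhi
  obtain ⟨_, hray2⟩ := fdtdq_rayleigh_bounds Pmat hA (Sum.elim (ψR 0) (ψI 0))
    (sInf (spectrum ℝ Pmat)) (sSup (spectrum ℝ Pmat)) hlo hhi
  have hkey : Sum.elim (ψR n) (ψI n) ⬝ᵥ Sum.elim (ψR n) (ψI n)
      ≤ (sSup (spectrum ℝ Pmat) / sInf (spectrum ℝ Pmat))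
        * (Sum.elim (ψR 0) (ψI 0) ⬝ᵥ Sum.elim (ψR 0) (ψI 0)) := by
    rw [div_mul_eq_mul_div, le_div_iff₀ hminpos]
    rw [hcons n] at hray1
    nlinarith [hray1, hray2]
  rw [fdtdq_norm_eq_sqrt_dot, fdtdq_norm_eq_sqrt_dot]
  calc Real.sqrt (Sum.elim (ψR n) (ψI n) ⬝ᵥ Sum.elim (ψR n) (ψI n))
      ≤ Real.sqrt ((sSup (spectrum ℝ Pmat) / sInf (spectrum ℝ Pmat))
          * (Sum.elim (ψR 0) (ψI 0) ⬝ᵥ Sum.elim (ψR 0) (ψI 0))) := Real.sqrt_le_sqrt hkey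
    _ = Real.sqrt (sSup (spectrum ℝ Pmat) / sInf (spectrum ℝ Pmat))
          * Real.sqrt (Sum.elim (ψR 0) (ψI 0) ⬝ᵥ Sum.elim (ψR 0) (ψI 0)) :=
        Real.sqrt_mul (div_nonneg hmaxnn hminpos.le) _
end

section
/- (Section 5.2.2, stability of two coupled FDTD-Q regions.) Let two abstract FDTD-Q regions A and B be given, sharing the same real constants ℏ > 0 and Δt > 0: region A has data (NA, MA, symmetric HA, VA := Matrix.diagonal dA with positive entries, H⊥A, sequences ψRA, ψIA, gRA, gIA satisfying the update equations (UpdA),(UpdB), total probability PA, outward probability current IPA), and region B has analogous data (NB, MB, HB, VB, H⊥B, ψRB, ψIB, gRB, gIB, PB, IPB). Assume 𝒫A := Matrix.fromBlocks VA (-(Δt/(2*ℏ)) • HA) (-(Δt/(2*ℏ)) • HA) VA and the analogous 𝒫B are both positive definite, and that the coupling is probability-conserving: IPA n + IPB n = 0 for all n. Then for all n : ℕ: (i) PA n + PB n = PA 0 + PB 0; and (ii) ‖Sum.elim (ψRA n) (ψIA n)‖² ≤ (PA 0 + PB 0)/λmin(𝒫A), where λmin(𝒫A) is the smallest eigenvalue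 of 𝒫A and ‖·‖ is the Euclidean norm on Fin NA ⊕ Fin NA → ℝ. -/
open Matrix Pointwise

open Matrix

lemma dot_symm {n : Type*} [Fintype n] {M : Matrix n n ℝ} (hM : Mᵀ = M) (a b : n → ℝ) :
    a ⬝ᵥ M *ᵥ b = b ⬝ᵥ M *ᵥ a := by
  rw [dotProduct_mulVec, ← mulVec_transpose, hM, dotProduct_comm]

lemma region_step (N M : ℕ) (ℏ Δt : ℝ) (hℏ : ℏ ≠ 0)
    (H : Matrix (Fin N) (Fin N) ℝ) (hH : Hᵀ = H) (Hb : Matrix (Fin N) (Fin M) ℝ)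
    (d : Fin N → ℝ) (ψR ψI ψR' ψI' : Fin N → ℝ) (gR gI : Fin M → ℝ)
    (hA : ℏ • (Matrix.diagonal d).mulVec (ψR' - ψR) = Δt • (H.mulVec ψI' - Hb.mulVec gI))
    (hB : ℏ • (Matrix.diagonal d).mulVec (ψI' - ψI) = Δt • (-(H.mulVec ψR) + Hb.mulVec gR)) :
    (ψR' ⬝ᵥ (Matrix.diagonal d).mulVec ψR' + ψI' ⬝ᵥ (Matrix.diagonal d).mulVec ψI'
        - (Δt/ℏ) * (ψI' ⬝ᵥ H.mulVec ψR'))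
      - (ψR ⬝ᵥ (Matrix.diagonal d).mulVec ψR + ψI ⬝ᵥ (Matrix.diagonal d).mulVec ψI
        - (Δt/ℏ) * (ψI ⬝ᵥ H.mulVec ψR))
    = -Δt * ((2/ℏ) * (((ψR' + ψR)/2) ⬝ᵥ Hb.mulVec gI - ((ψI' + ψI)/2) ⬝ᵥ Hb.mulVec gR)) := by
  have e1 := congrArg (fun v => (ψR' + ψR) ⬝ᵥ v) hA
  have e2 := congrArg (fun v => (ψI' + ψI) ⬝ᵥ v) hB
  simp only [dotProduct_smul, mulVec_sub, mulVec_add, mulVec_neg, dotProduct_sub,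
    dotProduct_add, add_dotProduct, dotProduct_neg, smul_eq_mul] at e1 e2
  have hVd : (Matrix.diagonal d)ᵀ = Matrix.diagonal d := Matrix.diagonal_transpose d
  have s1 := dot_symm hVd ψR ψR'
  have s2 := dot_symm hVd ψI ψI'
  have s3 := dot_symm hH ψR' ψI'
  have s4 := dot_symm hH ψR ψI'
  have h2R : (ψR' + ψR)/2 = (2⁻¹ : ℝ) • (ψR' + ψR) := by
    ext i; simp [Pi.div_apply]; ring
  have h2I : (ψI' + ψI)/2 = (2⁻¹ : ℝ) • (ψI' + ψI) := by
    ext i; simp [Pi.div_apply]; ring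
  rw [h2R, h2I]
  simp only [smul_dotProduct, add_dotProduct, smul_eq_mul]
  rw [show Δt = (Δt/ℏ)*ℏ from (div_mul_cancel₀ Δt hℏ).symm] at e1 e2
  refine mul_left_cancel₀ hℏ ?_
  linear_combination e1 + e2 - ℏ*s1 - ℏ*s2 + ((Δt/ℏ)*ℏ)*s3 + ((Δt/ℏ)*ℏ)*s4


lemma quadform_eq (N : ℕ) (c : ℝ) (V H : Matrix (Fin N) (Fin N) ℝ) (hH : Hᵀ = H)
    (a b : Fin N → ℝ) :
    Sum.elim a b ⬝ᵥ (Matrix.fromBlocks V (c • H) (c • H) V).mulVec (Sum.elim a b)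
      = a ⬝ᵥ V *ᵥ a + b ⬝ᵥ V *ᵥ b + 2*c*(b ⬝ᵥ H *ᵥ a) := by
  rw [fromBlocks_mulVec, sumElim_dotProduct_sumElim]
  simp only [Sum.elim_comp_inl, Sum.elim_comp_inr, dotProduct_add, smul_mulVec,
    dotProduct_smul, smul_eq_mul]
  rw [dot_symm hH a b]
  ring

lemma posSemidef_quad {n : Type*} [Fintype n] {M : Matrix n n ℝ} (h : M.PosSemidef)
    (x : n → ℝ) : 0 ≤ x ⬝ᵥ M *ᵥ x := by
  simpa using h.dotProduct_mulVec_nonneg x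

lemma isHermitian_of_transpose {n : Type*} [Fintype n] {M : Matrix n n ℝ} (hM : Mᵀ = M) :
    M.IsHermitian := by
  rw [Matrix.IsHermitian, conjTranspose_eq_transpose_of_trivial]; exact hM

-- Rayleigh lower bound via shifted matrix
lemma rayleigh_min {n : Type*} [Fintype n] [DecidableEq n] [Nonempty n]
    {M : Matrix n n ℝ} (hM : M.IsHermitian) (x : n → ℝ) :
    sInf (spectrum ℝ M) * (x ⬝ᵥ x) ≤ x ⬝ᵥ M *ᵥ x := by
  set μ := sInf (spectrum ℝ M) with hμ
  have hspec : spectrum ℝ M = Set.range hM.eigenvalues := hM.spectrum_real_eq_range_eigenvalues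
  have hfin : (spectrum ℝ M).Finite := M.finite_real_spectrum
  have hbdd : BddBelow (spectrum ℝ M) := hfin.bddBelow
  -- M + (-μ) • 1 is PosSemidef
  have hM' : (M + (-μ) • 1).IsHermitian := by
    apply hM.add
    apply isHermitian_of_transpose
    simp [transpose_smul]
  have hps : (M + (-μ) • 1).PosSemidef := by
    apply hM'.posSemidef_iff_eigenvalues_nonneg.mpr
    intro i
    have hmem : hM'.eigenvalues i ∈ spectrum ℝ (M + (-μ) • 1) :=
      hM'.eigenvalues_mem_spectrum_real i
    have hset : spectrum ℝ (M + (-μ) • 1) = spectrum ℝ M + {-μ} := by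
      rw [show M + (-μ) • (1 : Matrix n n ℝ) = M + algebraMap ℝ (Matrix n n ℝ) (-μ) by
        rw [Algebra.algebraMap_eq_smul_one]]
      exact (spectrum.add_singleton_eq M (-μ)).symm
    rw [hset] at hmem
    obtain ⟨l, hl, m, hm, hlm⟩ := Set.mem_add.mp hmem
    simp only [Set.mem_singleton_iff] at hm
    have hμl : μ ≤ l := csInf_le hbdd hl
    rw [← hlm, hm]
    show (0:ℝ) ≤ _; linarith
  have h0 := posSemidef_quad hps x
  have hexp : x ⬝ᵥ (M + (-μ) • 1) *ᵥ x = x ⬝ᵥ M *ᵥ x - μ * (x ⬝ᵥ x) := by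
    simp only [add_mulVec, dotProduct_add, neg_smul, neg_mulVec, smul_mulVec,
      one_mulVec, dotProduct_neg, dotProduct_smul, smul_eq_mul]
    ring
  linarith [hexp ▸ h0]

lemma sInf_spectrum_pos {n : Type*} [Fintype n] [DecidableEq n] [Nonempty n]
    {M : Matrix n n ℝ} (hM : M.PosDef) : 0 < sInf (spectrum ℝ M) := by
  have hspec : spectrum ℝ M = Set.range hM.1.eigenvalues := hM.1.spectrum_real_eq_range_eigenvalues
  have hfin : (spectrum ℝ M).Finite := M.finite_real_spectrum
  have hne : (spectrum ℝ M).Nonempty := by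
    rw [hspec]; exact Set.range_nonempty _
  have hmem : sInf (spectrum ℝ M) ∈ spectrum ℝ M := hne.csInf_mem hfin
  rw [hspec] at hmem
  obtain ⟨j, hj⟩ := hmem
  rw [hspec, ← hj]
  exact hM.eigenvalues_pos j

/-- Section 5.2.2 of the paper: two coupled FDTD-Q regions `A` and `B`, each with a
positive-definite probability matrix, whose coupling is probability conserving
(`IPA n + IPB n = 0`), satisfy: (i) the total probability `PA n + PB n` is constant,
and (ii) the squared Euclidean norm of region A's state vector is bounded by
`(PA 0 + PB 0)/λmin(𝒫A)`. -/
theorem fdtdq_coupled_regions_stability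
    (NA MA NB MB : ℕ) (ℏ Δt : ℝ) (hℏ : 0 < ℏ) (hΔt : 0 < Δt)
    -- region A data
    (HA : Matrix (Fin NA) (Fin NA) ℝ) (hHA : HAᵀ = HA)
    (HbA : Matrix (Fin NA) (Fin MA) ℝ)
    (dA : Fin NA → ℝ) (hdA : ∀ i, 0 < dA i)
    (ψRA ψIA : ℕ → (Fin NA → ℝ)) (gRA gIA : ℕ → (Fin MA → ℝ))
    (hUpdAA : ∀ n : ℕ, ℏ • (Matrix.diagonal dA).mulVec (ψRA (n+1) - ψRA n)
        = Δt • (HA.mulVec (ψIA (n+1)) - HbA.mulVec (gIA n)))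
    (hUpdBA : ∀ n : ℕ, ℏ • (Matrix.diagonal dA).mulVec (ψIA (n+1) - ψIA n)
        = Δt • (-(HA.mulVec (ψRA n)) + HbA.mulVec (gRA n)))
    -- region B data
    (HB : Matrix (Fin NB) (Fin NB) ℝ) (hHB : HBᵀ = HB)
    (HbB : Matrix (Fin NB) (Fin MB) ℝ)
    (dB : Fin NB → ℝ) (hdB : ∀ i, 0 < dB i)
    (ψRB ψIB : ℕ → (Fin NB → ℝ)) (gRB gIB : ℕ → (Fin MB → ℝ))
    (hUpdAB : ∀ n : ℕ, ℏ • (Matrix.diagonal dB).mulVec (ψRB (n+1) - ψRB n)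
        = Δt • (HB.mulVec (ψIB (n+1)) - HbB.mulVec (gIB n)))
    (hUpdBB : ∀ n : ℕ, ℏ • (Matrix.diagonal dB).mulVec (ψIB (n+1) - ψIB n)
        = Δt • (-(HB.mulVec (ψRB n)) + HbB.mulVec (gRB n)))
    -- probability matrices and their positive definiteness
    (PmatA : Matrix (Fin NA ⊕ Fin NA) (Fin NA ⊕ Fin NA) ℝ)
    (hPmatA : PmatA = Matrix.fromBlocks (Matrix.diagonal dA) (-(Δt/(2*ℏ)) • HA)
        (-(Δt/(2*ℏ)) • HA) (Matrix.diagonal dA))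
    (hPDA : PmatA.PosDef)
    (PmatB : Matrix (Fin NB ⊕ Fin NB) (Fin NB ⊕ Fin NB) ℝ)
    (hPmatB : PmatB = Matrix.fromBlocks (Matrix.diagonal dB) (-(Δt/(2*ℏ)) • HB)
        (-(Δt/(2*ℏ)) • HB) (Matrix.diagonal dB))
    (hPDB : PmatB.PosDef)
    -- total probabilities and outward probability currents
    (PA : ℕ → ℝ)
    (hPA : ∀ n : ℕ, PA n = ψRA n ⬝ᵥ (Matrix.diagonal dA).mulVec (ψRA n)
        + ψIA n ⬝ᵥ (Matrix.diagonal dA).mulVec (ψIA n)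
        - (Δt/ℏ) * (ψIA n ⬝ᵥ HA.mulVec (ψRA n)))
    (PB : ℕ → ℝ)
    (hPB : ∀ n : ℕ, PB n = ψRB n ⬝ᵥ (Matrix.diagonal dB).mulVec (ψRB n)
        + ψIB n ⬝ᵥ (Matrix.diagonal dB).mulVec (ψIB n)
        - (Δt/ℏ) * (ψIB n ⬝ᵥ HB.mulVec (ψRB n)))
    (IPA : ℕ → ℝ)
    (hIPA : ∀ n : ℕ, IPA n = (2/ℏ) * (((ψRA (n+1) + ψRA n)/2) ⬝ᵥ HbA.mulVec (gIA n)
        - ((ψIA (n+1) + ψIA n)/2) ⬝ᵥ HbA.mulVec (gRA n)))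
    (IPB : ℕ → ℝ)
    (hIPB : ∀ n : ℕ, IPB n = (2/ℏ) * (((ψRB (n+1) + ψRB n)/2) ⬝ᵥ HbB.mulVec (gIB n)
        - ((ψIB (n+1) + ψIB n)/2) ⬝ᵥ HbB.mulVec (gRB n)))
    -- probability-conserving coupling
    (hcoupling : ∀ n : ℕ, IPA n + IPB n = 0) :
    (∀ n : ℕ, PA n + PB n = PA 0 + PB 0)
    ∧ (∀ n : ℕ,
        ‖(EuclideanSpace.equiv (Fin NA ⊕ Fin NA) ℝ).symm (Sum.elim (ψRA n) (ψIA n))‖^2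
          ≤ (PA 0 + PB 0) / sInf (spectrum ℝ PmatA)) := by
  
  -- conservation of total probability
  have hstepA : ∀ n : ℕ, PA n + PB n = PA 0 + PB 0 := by
    have hstep : ∀ n : ℕ, PA (n+1) + PB (n+1) = PA n + PB n := by
      intro n
      have dAs := region_step NA MA ℏ Δt hℏ.ne' HA hHA HbA dA (ψRA n) (ψIA n)
        (ψRA (n+1)) (ψIA (n+1)) (gRA n) (gIA n) (hUpdAA n) (hUpdBA n)
      have dBs := region_step NB MB ℏ Δt hℏ.ne' HB hHB HbB dB (ψRB n) (ψIB n)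
        (ψRB (n+1)) (ψIB (n+1)) (gRB n) (gIB n) (hUpdAB n) (hUpdBB n)
      have hc := hcoupling n
      rw [hIPA n] at hc
      rw [hIPB n] at hc
      rw [hPA n, hPA (n+1), hPB n, hPB (n+1)]
      nlinarith [dAs, dBs, hc]
    intro n
    induction n with
    | zero => rfl
    | succ k ih => rw [hstep k]; exact ih
  refine ⟨hstepA, ?_⟩
  intro n
  set x : (Fin NA ⊕ Fin NA) → ℝ := Sum.elim (ψRA n) (ψIA n) with hx
  have hhalf : (2:ℝ) * (-(Δt/(2*ℏ))) = -(Δt/ℏ) := by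
    field_simp
  have hquadA : x ⬝ᵥ PmatA.mulVec x = PA n := by
    rw [hx, hPmatA, quadform_eq NA (-(Δt/(2*ℏ))) (Matrix.diagonal dA) HA hHA, hPA n]
    rw [show 2 * (-(Δt/(2*ℏ))) * (ψIA n ⬝ᵥ HA *ᵥ ψRA n)
        = ((2:ℝ) * (-(Δt/(2*ℏ)))) * (ψIA n ⬝ᵥ HA *ᵥ ψRA n) from by ring, hhalf]
    ring
  have hquadB : (Sum.elim (ψRB n) (ψIB n)) ⬝ᵥ PmatB.mulVec (Sum.elim (ψRB n) (ψIB n)) = PB n := by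
    rw [hPmatB, quadform_eq NB (-(Δt/(2*ℏ))) (Matrix.diagonal dB) HB hHB, hPB n]
    rw [show 2 * (-(Δt/(2*ℏ))) * (ψIB n ⬝ᵥ HB *ᵥ ψRB n)
        = ((2:ℝ) * (-(Δt/(2*ℏ)))) * (ψIB n ⬝ᵥ HB *ᵥ ψRB n) from by ring, hhalf]
    ring
  have hPBn : 0 ≤ PB n := by
    rw [← hquadB]
    exact posSemidef_quad hPDB.posSemidef _
  have hPAle : PA n ≤ PA 0 + PB 0 := by
    have := hstepA n
    linarith
  have hnorm : ‖(EuclideanSpace.equiv (Fin NA ⊕ Fin NA) ℝ).symm x‖^2 = x ⬝ᵥ x := by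
    rw [← real_inner_self_eq_norm_sq]
    simp [EuclideanSpace.equiv, PiLp.inner_apply, RCLike.inner_apply, dotProduct, EuclideanSpace.norm_sq_eq, Fintype.sum_sum_type, ← sq]
  cases isEmpty_or_nonempty (Fin NA ⊕ Fin NA) with
  | inl hE =>
    have hspec : spectrum ℝ PmatA = ∅ := spectrum.of_subsingleton PmatA
    rw [hspec, Real.sInf_empty, div_zero]
    have hx0 : x ⬝ᵥ x = 0 := by simp [dotProduct]
    rw [hnorm, hx0]
  | inr hNE =>
    have hray := rayleigh_min hPDA.1 x
    have hpos := sInf_spectrum_pos hPDA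
    rw [hquadA] at hray
    rw [hnorm, le_div_iff₀ hpos]
    nlinarith [hray, hPAle]
end

section
/- (Theorem 2: the conventional CFL limit is at most the generalized CFL limit.) For the concrete 3-D FDTD-Q region, every eigenvalue μ ∈ spectrum ℝ Σ satisfies |μ| ≤ (2*ℏ/m) * (1/Δx^2 + 1/Δy^2 + 1/Δz^2) + (1/ℏ) * (max over p ∈ 𝒩 of |U p|). Equivalently, Δt_CFL := 2/((2*ℏ/m)*(1/Δx^2+1/Δy^2+1/Δz^2) + (max over p ∈ 𝒩 of |U p|)/ℏ) is at most the generalized CFL limit Δt_CFL,gen := 2/ρ(Σ), where ρ(Σ) is the maximum of |μ| over eigenvalues μ of Σ. -/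
open Matrix Kronecker

noncomputable section

abbrev Node (nx ny nz : ℕ) := Fin (nz+1) × Fin (ny+1) × Fin (nx+1)

/-- Triple Kronecker product with indices identified with `α × β × γ`. -/
def kron3 {α β γ : Type*} (A : Matrix α α ℝ) (B : Matrix β β ℝ) (C : Matrix γ γ ℝ) :
    Matrix (α × β × γ) (α × β × γ) ℝ :=
  Matrix.reindex (Equiv.prodAssoc α β γ) (Equiv.prodAssoc α β γ) (A ⊗ₖ B ⊗ₖ C)

/-- 1-D finite-difference matrix `W p`: `-1` at `j = castSucc i`, `+1` at `j = succ i`. -/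
def Wmat (p : ℕ) : Matrix (Fin p) (Fin (p+1)) ℝ :=
  Matrix.of fun i j => if j = Fin.castSucc i then (-1 : ℝ) else if j = Fin.succ i then 1 else 0

/-- 1-D stiffness matrix `A p = (W p)ᵀ * W p`. -/
def Amat (p : ℕ) : Matrix (Fin (p+1)) (Fin (p+1)) ℝ := (Wmat p)ᵀ * Wmat p

/-- Diagonal matrix with first and last entries `1/2`, all others `1`. -/
def Itl (p : ℕ) : Matrix (Fin (p+1)) (Fin (p+1)) ℝ :=
  Matrix.diagonal (fun i => if i = 0 ∨ i = Fin.last p then (1:ℝ)/2 else 1)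

/-- Secondary-cell volume matrix `V''`. -/
def Vsec (nx ny nz : ℕ) (Δx Δy Δz : ℝ) : Matrix (Node nx ny nz) (Node nx ny nz) ℝ :=
  Matrix.diagonal (fun p =>
    Δx * Δy * Δz * Itl nz p.1 p.1 * Itl ny p.2.1 p.2.1 * Itl nx p.2.2 p.2.2)

/-- The FDTD-Q Hamiltonian matrix `H`. -/
def Hmat (nx ny nz : ℕ) (ℏ m Δx Δy Δz : ℝ) (U : Node nx ny nz → ℝ) :
    Matrix (Node nx ny nz) (Node nx ny nz) ℝ :=
  (ℏ^2/(2*m)) • ((Δy*Δz/Δx) • kron3 (Itl nz) (Itl ny) (Amat nx)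
    + (Δx*Δz/Δy) • kron3 (Itl nz) (Amat ny) (Itl nx)
    + (Δx*Δy/Δz) • kron3 (Amat nz) (Itl ny) (Itl nx))
  + Vsec nx ny nz Δx Δy Δz * Matrix.diagonal U

/-- Diagonal matrix of reciprocal square roots of the diagonal of `V''`. -/
def Dmat (nx ny nz : ℕ) (Δx Δy Δz : ℝ) : Matrix (Node nx ny nz) (Node nx ny nz) ℝ :=
  Matrix.diagonal (fun p => 1 / Real.sqrt (Vsec nx ny nz Δx Δy Δz p p))

/-- The scaled Hamiltonian `Σ = (1/ℏ) • (D * H * D)`. -/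
def Sgm (nx ny nz : ℕ) (ℏ m Δx Δy Δz : ℝ) (U : Node nx ny nz → ℝ) :
    Matrix (Node nx ny nz) (Node nx ny nz) ℝ :=
  (1/ℏ) • (Dmat nx ny nz Δx Δy Δz * Hmat nx ny nz ℏ m Δx Δy Δz U * Dmat nx ny nz Δx Δy Δz)

/-! ### Auxiliary lemmas -/

lemma spec_bound {n : Type*} [Fintype n] [DecidableEq n] (M : Matrix n n ℝ) (C : ℝ)
    (h : ∀ v : n → ℝ, |v ⬝ᵥ M.mulVec v| ≤ C * (v ⬝ᵥ v)) :
    ∀ μ ∈ spectrum ℝ M, |μ| ≤ C := by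
  intro μ hμ
  rw [← AlgEquiv.spectrum_eq (Matrix.toLinAlgEquiv (Pi.basisFun ℝ n))] at hμ
  have he : Module.End.HasEigenvalue (Matrix.toLin (Pi.basisFun ℝ n) (Pi.basisFun ℝ n) M) μ :=
    Module.End.hasEigenvalue_iff_mem_spectrum.mpr hμ
  obtain ⟨v, hv⟩ := he.exists_hasEigenvector
  have hmv : M.mulVec v = μ • v := by
    have := hv.apply_eq_smul
    simpa [Matrix.toLin_eq_toLin', Matrix.toLin'_apply] using this
  have hvv : (0:ℝ) < v ⬝ᵥ v := by
    obtain ⟨i, hi⟩ := Function.ne_iff.mp hv.2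
    have hd : v ⬝ᵥ v = ∑ j, v j ^ 2 := by simp [dotProduct, sq]
    rw [hd]
    refine Finset.sum_pos' (fun j _ => sq_nonneg _) ⟨i, Finset.mem_univ i, ?_⟩
    have : v i ≠ 0 := by simpa using hi
    positivity
  have := h v
  rw [hmv] at this
  have hdot : v ⬝ᵥ (μ • v) = μ * (v ⬝ᵥ v) := by simp [dotProduct_smul, smul_eq_mul]
  rw [hdot, abs_mul] at this
  have : |μ| * (v ⬝ᵥ v) ≤ C * (v ⬝ᵥ v) := le_trans (by
    have : |μ| * |v ⬝ᵥ v| = |μ| * (v ⬝ᵥ v) := by rw [abs_of_pos hvv]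
    linarith [this]) this
  exact le_of_mul_le_mul_right this hvv |>.trans_eq rfl

lemma kron3_apply {α β γ : Type*} (A : Matrix α α ℝ) (B : Matrix β β ℝ) (C : Matrix γ γ ℝ)
    (p q : α × β × γ) : kron3 A B C p q = A p.1 q.1 * B p.2.1 q.2.1 * C p.2.2 q.2.2 := by
  obtain ⟨k, j, i⟩ := p; obtain ⟨k', j', i'⟩ := q
  simp [kron3, Matrix.reindex_apply, Equiv.prodAssoc, Matrix.kroneckerMap_apply]

section QuadKron
variable {α β γ : Type*} [Fintype α] [Fintype β] [Fintype γ]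
  [DecidableEq α] [DecidableEq β] [DecidableEq γ]

set_option linter.unusedSectionVars false

lemma quad_dd_right (f : α → ℝ) (g : β → ℝ) (C : Matrix γ γ ℝ) (v : α × β × γ → ℝ) :
    v ⬝ᵥ (kron3 (diagonal f) (diagonal g) C).mulVec v
      = ∑ k, ∑ j, f k * g j *
        ((fun i => v (k,j,i)) ⬝ᵥ C.mulVec (fun i => v (k,j,i))) := by
  simp only [dotProduct, mulVec, kron3_apply, Fintype.sum_prod_type, diagonal_apply,
    ite_mul, mul_ite, zero_mul, mul_zero, Finset.sum_ite_eq, Finset.sum_ite_eq',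
    Finset.mem_univ, if_true, Finset.mul_sum, Finset.sum_ite_irrel, Finset.sum_const_zero]
  exact Finset.sum_congr rfl fun k _ => Finset.sum_congr rfl fun j _ =>
    Finset.sum_congr rfl fun i _ => Finset.sum_congr rfl fun i' _ => by ring

lemma quad_dd_mid (f : α → ℝ) (B : Matrix β β ℝ) (g : γ → ℝ) (v : α × β × γ → ℝ) :
    v ⬝ᵥ (kron3 (diagonal f) B (diagonal g)).mulVec v
      = ∑ k, ∑ i, f k * g i *
        ((fun j => v (k,j,i)) ⬝ᵥ B.mulVec (fun j => v (k,j,i))) := by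
  simp only [dotProduct, mulVec, kron3_apply, Fintype.sum_prod_type, diagonal_apply,
    ite_mul, mul_ite, zero_mul, mul_zero, Finset.sum_ite_eq, Finset.sum_ite_eq',
    Finset.mem_univ, if_true, Finset.mul_sum, Finset.sum_ite_irrel, Finset.sum_const_zero]
  refine Finset.sum_congr rfl fun k _ => ?_
  rw [Finset.sum_comm]
  exact Finset.sum_congr rfl fun i _ => Finset.sum_congr rfl fun j _ =>
    Finset.sum_congr rfl fun j' _ => by ring

lemma quad_dd_left (A : Matrix α α ℝ) (f : β → ℝ) (g : γ → ℝ) (v : α × β × γ → ℝ) :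
    v ⬝ᵥ (kron3 A (diagonal f) (diagonal g)).mulVec v
      = ∑ j, ∑ i, f j * g i *
        ((fun k => v (k,j,i)) ⬝ᵥ A.mulVec (fun k => v (k,j,i))) := by
  simp only [dotProduct, mulVec, kron3_apply, Fintype.sum_prod_type, diagonal_apply,
    ite_mul, mul_ite, zero_mul, mul_zero, Finset.sum_ite_eq, Finset.sum_ite_eq',
    Finset.mem_univ, if_true, Finset.mul_sum, Finset.sum_ite_irrel, Finset.sum_const_zero]
  rw [Finset.sum_comm]
  refine Finset.sum_congr rfl fun j _ => ?_
  rw [Finset.sum_comm]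
  exact Finset.sum_congr rfl fun i _ => Finset.sum_congr rfl fun k _ =>
    Finset.sum_congr rfl fun k' _ => by ring

end QuadKron

lemma Wmat_mulVec (p : ℕ) (u : Fin (p+1) → ℝ) (r : Fin p) :
    (Wmat p).mulVec u r = u r.succ - u r.castSucc := by
  simp only [mulVec, dotProduct, Wmat, Matrix.of_apply]
  rw [Finset.sum_congr rfl (fun j _ => show
      (if j = Fin.castSucc r then (-1:ℝ) else if j = Fin.succ r then 1 else 0) * u j
      = (if j = Fin.castSucc r then -u j else 0) + (if j = Fin.succ r then u j else 0) from by
    rcases eq_or_ne j (Fin.castSucc r) with h1 | h1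
    · subst h1
      rw [if_pos rfl, if_pos rfl, if_neg (Fin.castSucc_lt_succ : Fin.castSucc r < r.succ).ne]
      ring
    · rw [if_neg h1, if_neg h1]
      rcases eq_or_ne j (Fin.succ r) with h2 | h2
      · subst h2; rw [if_pos rfl, if_pos rfl]; ring
      · rw [if_neg h2, if_neg h2]; ring)]
  rw [Finset.sum_add_distrib, Finset.sum_ite_eq' Finset.univ, Finset.sum_ite_eq' Finset.univ]
  simp [sub_eq_add_neg, add_comm]

lemma Amat_quad (p : ℕ) (u : Fin (p+1) → ℝ) :
    u ⬝ᵥ (Amat p).mulVec u = ∑ r : Fin p, (u r.succ - u r.castSucc)^2 := by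
  have : u ⬝ᵥ (Amat p).mulVec u = ((Wmat p).mulVec u) ⬝ᵥ ((Wmat p).mulVec u) := by
    rw [Amat, ← Matrix.mulVec_mulVec, Matrix.dotProduct_mulVec, Matrix.vecMul_transpose]
  rw [this]
  simp [dotProduct, Wmat_mulVec, sq]

/-- The diagonal entries of `Itl` as a function. -/
def Ifun (p : ℕ) (i : Fin (p+1)) : ℝ := if i = 0 ∨ i = Fin.last p then (1:ℝ)/2 else 1

lemma Itl_eq (p : ℕ) : Itl p = Matrix.diagonal (Ifun p) := rfl

lemma Ifun_pos (p : ℕ) (i : Fin (p+1)) : 0 < Ifun p i := by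
  unfold Ifun; split <;> norm_num

lemma key1D (p : ℕ) (v : Fin (p+1) → ℝ) :
    ∑ r : Fin p, (v r.succ / Real.sqrt (Ifun p r.succ)
        - v r.castSucc / Real.sqrt (Ifun p r.castSucc))^2
      ≤ 4 * ∑ j, (v j)^2 := by
  set t : Fin (p+1) → ℝ := fun j => v j / Real.sqrt (Ifun p j) with ht
  have ht2 : ∀ j, (t j)^2 = (v j)^2 / Ifun p j := by
    intro j
    rw [ht]
    simp only []
    rw [div_pow, Real.sq_sqrt (Ifun_pos p j).le]
  have step1 : ∑ r : Fin p, (t r.succ - t r.castSucc)^2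
      ≤ ∑ r : Fin p, (2 * (t r.succ)^2 + 2 * (t r.castSucc)^2) :=
    Finset.sum_le_sum fun r _ => by nlinarith [sq_nonneg (t r.succ + t r.castSucc)]
  have hsucc : ∑ r : Fin p, (t r.succ)^2
      = ∑ j : Fin (p+1), (if j = 0 then 0 else (t j)^2) := by
    rw [Fin.sum_univ_succ]
    simp [Fin.succ_ne_zero]
  have hcast : ∑ r : Fin p, (t r.castSucc)^2
      = ∑ j : Fin (p+1), (if j = Fin.last p then 0 else (t j)^2) := by
    have h := Fin.sum_univ_castSucc (M := ℝ) (n := p)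
      (fun j => if j = Fin.last p then (0:ℝ) else t j^2)
    rw [h, if_pos rfl, add_zero]
    exact Finset.sum_congr rfl fun r _ => (if_neg (Fin.castSucc_lt_last r).ne).symm
  calc ∑ r : Fin p, (t r.succ - t r.castSucc)^2
      ≤ ∑ r : Fin p, (2 * (t r.succ)^2 + 2 * (t r.castSucc)^2) := step1
    _ = 2 * (∑ j : Fin (p+1), (if j = 0 then 0 else (t j)^2))
        + 2 * (∑ j : Fin (p+1), (if j = Fin.last p then 0 else (t j)^2)) := by
        rw [Finset.sum_add_distrib, ← Finset.mul_sum, ← Finset.mul_sum, hsucc, hcast]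
    _ = ∑ j : Fin (p+1), (2 * (if j = 0 then 0 else (t j)^2)
        + 2 * (if j = Fin.last p then 0 else (t j)^2)) := by
        rw [Finset.sum_add_distrib, ← Finset.mul_sum, ← Finset.mul_sum]
    _ ≤ ∑ j : Fin (p+1), 4 * (v j)^2 := by
        refine Finset.sum_le_sum fun j _ => ?_
        rw [ht2]
        have hI : Ifun p j = if j = 0 ∨ j = Fin.last p then (1:ℝ)/2 else 1 := rfl
        by_cases h0 : j = 0
        · by_cases hl : j = Fin.last p
          · rw [if_pos h0, if_pos hl]; nlinarith [sq_nonneg (v j)]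
          · rw [if_pos h0, if_neg hl, hI, if_pos (Or.inl h0)]
            have hvj : v j ^ 2 / ((1:ℝ)/2) = 2 * v j ^ 2 := by ring
            rw [hvj]; nlinarith [sq_nonneg (v j)]
        · by_cases hl : j = Fin.last p
          · rw [if_neg h0, if_pos hl, hI, if_pos (Or.inr hl)]
            have hvj : v j ^ 2 / ((1:ℝ)/2) = 2 * v j ^ 2 := by ring
            rw [hvj]; nlinarith [sq_nonneg (v j)]
          · rw [if_neg h0, if_neg hl, hI, if_neg (by tauto), div_one]
            nlinarith [sq_nonneg (v j)]
    _ = 4 * ∑ j, (v j)^2 := by rw [Finset.mul_sum]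

lemma slice_bound (q : ℕ) (c : ℝ) (hc : 0 < c) (g : Fin (q+1) → ℝ) :
    c * ∑ r : Fin q, (g r.succ / Real.sqrt (c * Ifun q r.succ)
        - g r.castSucc / Real.sqrt (c * Ifun q r.castSucc))^2
      ≤ 4 * ∑ i, (g i)^2 := by
  have hs : ∀ i : Fin (q+1), g i / Real.sqrt (c * Ifun q i)
      = (1 / Real.sqrt c) * (g i / Real.sqrt (Ifun q i)) := by
    intro i
    rw [Real.sqrt_mul hc.le]
    field_simp
  have hrw : ∑ r : Fin q, (g r.succ / Real.sqrt (c * Ifun q r.succ)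
        - g r.castSucc / Real.sqrt (c * Ifun q r.castSucc))^2
      = (1/c) * ∑ r : Fin q, (g r.succ / Real.sqrt (Ifun q r.succ)
        - g r.castSucc / Real.sqrt (Ifun q r.castSucc))^2 := by
    rw [Finset.mul_sum]
    refine Finset.sum_congr rfl fun r _ => ?_
    rw [hs, hs, ← mul_sub, mul_pow, div_pow, one_pow, Real.sq_sqrt hc.le]
  rw [hrw, ← mul_assoc, mul_one_div, div_self hc.ne', one_mul]
  exact key1D q g

set_option maxHeartbeats 2000000 in
/-- Theorem 2 of the paper: every eigenvalue of the scaled FDTD-Q Hamiltonian `Σ`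
is bounded in absolute value by the reciprocal of the conventional CFL limit (times 2),
i.e. the conventional CFL limit is at most the generalized CFL limit `2/ρ(Σ)`. -/
theorem fdtdq_conventional_CFL_le_generalized_CFL
    (nx ny nz : ℕ) (hnx : 0 < nx) (hny : 0 < ny) (hnz : 0 < nz)
    (ℏ m Δx Δy Δz : ℝ) (hℏ : 0 < ℏ) (hm : 0 < m)
    (hΔx : 0 < Δx) (hΔy : 0 < Δy) (hΔz : 0 < Δz)
    (U : Node nx ny nz → ℝ) :
    ∀ μ ∈ spectrum ℝ (Sgm nx ny nz ℏ m Δx Δy Δz U),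
      |μ| ≤ (2*ℏ/m) * (1/Δx^2 + 1/Δy^2 + 1/Δz^2)
        + (1/ℏ) * (Finset.univ.sup' Finset.univ_nonempty (fun p : Node nx ny nz => |U p|)) := by
  set MU : ℝ := Finset.univ.sup' Finset.univ_nonempty (fun p : Node nx ny nz => |U p|) with hMU
  refine spec_bound _ _ ?_
  intro v
  set S : ℝ := ∑ p : Node nx ny nz, (v p)^2 with hS
  set Vd : Node nx ny nz → ℝ := fun p =>
    Δx * Δy * Δz * Ifun nz p.1 * Ifun ny p.2.1 * Ifun nx p.2.2 with hVd
  have hVdpos : ∀ p, 0 < Vd p := by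
    intro p
    have h1 := Ifun_pos nz p.1; have h2 := Ifun_pos ny p.2.1; have h3 := Ifun_pos nx p.2.2
    rw [hVd]; positivity
  have hVsec : Vsec nx ny nz Δx Δy Δz = Matrix.diagonal Vd := by
    unfold Vsec; congr 1; funext p
    rw [hVd]; simp [Itl, Matrix.diagonal_apply_eq, Ifun]
  have hDd : Dmat nx ny nz Δx Δy Δz = Matrix.diagonal (fun p => 1 / Real.sqrt (Vd p)) := by
    have hfn : (fun p : Node nx ny nz => 1 / Real.sqrt (Vsec nx ny nz Δx Δy Δz p p))
        = fun p => 1 / Real.sqrt (Vd p) := by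
      funext p; rw [hVsec, Matrix.diagonal_apply_eq]
    unfold Dmat; rw [hfn]
  set w : Node nx ny nz → ℝ := fun p => (1 / Real.sqrt (Vd p)) * v p with hw
  have hwv : (Dmat nx ny nz Δx Δy Δz).mulVec v = w := by
    funext p; rw [hDd, hw]; simp [Matrix.mulVec_diagonal]
  have hquad : v ⬝ᵥ (Sgm nx ny nz ℏ m Δx Δy Δz U).mulVec v
      = (1/ℏ) * (w ⬝ᵥ (Hmat nx ny nz ℏ m Δx Δy Δz U).mulVec w) := by
    rw [Sgm, Matrix.smul_mulVec, dotProduct_smul, smul_eq_mul]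
    congr 1
    rw [← Matrix.mulVec_mulVec, ← Matrix.mulVec_mulVec, hwv, Matrix.dotProduct_mulVec]
    congr 1
    funext p
    rw [hDd, Matrix.vecMul_diagonal]
    simp only [hw]
    ring
  set Q1 : ℝ := w ⬝ᵥ (kron3 (Itl nz) (Itl ny) (Amat nx)).mulVec w with hQ1
  set Q2 : ℝ := w ⬝ᵥ (kron3 (Itl nz) (Amat ny) (Itl nx)).mulVec w with hQ2
  set Q3 : ℝ := w ⬝ᵥ (kron3 (Amat nz) (Itl ny) (Itl nx)).mulVec w with hQ3
  set QU : ℝ := w ⬝ᵥ (Vsec nx ny nz Δx Δy Δz * Matrix.diagonal U).mulVec w with hQU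
  have hexp : w ⬝ᵥ (Hmat nx ny nz ℏ m Δx Δy Δz U).mulVec w
      = (ℏ^2/(2*m)) * ((Δy*Δz/Δx) * Q1 + (Δx*Δz/Δy) * Q2 + (Δx*Δy/Δz) * Q3) + QU := by
    rw [hQ1, hQ2, hQ3, hQU]
    simp only [Hmat, Matrix.add_mulVec, Matrix.smul_mulVec, dotProduct_add,
      dotProduct_smul, smul_eq_mul]
    try ring
  -- sum reorderings of S
  have hSx : S = ∑ k, ∑ j, ∑ i, (v (k,j,i))^2 := by
    rw [hS]; simp [Fintype.sum_prod_type]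
  have hSy : S = ∑ k, ∑ i, ∑ j, (v (k,j,i))^2 := by
    rw [hSx]; exact Finset.sum_congr rfl fun k _ => Finset.sum_comm
  have hSz : S = ∑ j, ∑ i, ∑ k, (v (k,j,i))^2 := by
    rw [hSx, Finset.sum_comm]
    exact Finset.sum_congr rfl fun j _ => Finset.sum_comm
  -- Q1 : x-direction
  have hQ1eq : Q1 = ∑ k, ∑ j, Ifun nz k * Ifun ny j *
      (∑ r : Fin nx, (w (k,j,r.succ) - w (k,j,r.castSucc))^2) := by
    rw [hQ1, Itl_eq, Itl_eq, quad_dd_right]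
    exact Finset.sum_congr rfl fun k _ => Finset.sum_congr rfl fun j _ => by
      rw [Amat_quad]
  have hQ2eq : Q2 = ∑ k, ∑ i, Ifun nz k * Ifun nx i *
      (∑ r : Fin ny, (w (k,r.succ,i) - w (k,r.castSucc,i))^2) := by
    rw [hQ2, Itl_eq, Itl_eq, quad_dd_mid]
    exact Finset.sum_congr rfl fun k _ => Finset.sum_congr rfl fun i _ => by
      rw [Amat_quad]
  have hQ3eq : Q3 = ∑ j, ∑ i, Ifun ny j * Ifun nx i *
      (∑ r : Fin nz, (w (r.succ,j,i) - w (r.castSucc,j,i))^2) := by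
    rw [hQ3, Itl_eq, Itl_eq, quad_dd_left]
    exact Finset.sum_congr rfl fun j _ => Finset.sum_congr rfl fun i _ => by
      rw [Amat_quad]
  -- nonnegativity of kinetic terms
  have hQ1nn : 0 ≤ Q1 := by
    rw [hQ1eq]
    refine Finset.sum_nonneg fun k _ => Finset.sum_nonneg fun j _ => ?_
    have := Ifun_pos nz k; have := Ifun_pos ny j
    exact mul_nonneg (by positivity) (Finset.sum_nonneg fun r _ => sq_nonneg _)
  have hQ2nn : 0 ≤ Q2 := by
    rw [hQ2eq]
    refine Finset.sum_nonneg fun k _ => Finset.sum_nonneg fun i _ => ?_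
    have := Ifun_pos nz k; have := Ifun_pos nx i
    exact mul_nonneg (by positivity) (Finset.sum_nonneg fun r _ => sq_nonneg _)
  have hQ3nn : 0 ≤ Q3 := by
    rw [hQ3eq]
    refine Finset.sum_nonneg fun j _ => Finset.sum_nonneg fun i _ => ?_
    have := Ifun_pos ny j; have := Ifun_pos nx i
    exact mul_nonneg (by positivity) (Finset.sum_nonneg fun r _ => sq_nonneg _)
  -- bounds on kinetic terms
  have hT1le : (Δy*Δz/Δx) * Q1 ≤ 4/Δx^2 * S := by
    rw [hQ1eq, hSx, Finset.mul_sum, Finset.mul_sum]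
    refine Finset.sum_le_sum fun k _ => ?_
    rw [Finset.mul_sum, Finset.mul_sum]
    refine Finset.sum_le_sum fun j _ => ?_
    have hIz := Ifun_pos nz k; have hIy := Ifun_pos ny j
    set c : ℝ := Δx*Δy*Δz*Ifun nz k*Ifun ny j with hc
    have hcpos : 0 < c := by rw [hc]; positivity
    have hwd : ∀ i : Fin (nx+1), w (k,j,i) = v (k,j,i) / Real.sqrt (c * Ifun nx i) := by
      intro i
      have hVdi : Vd (k,j,i) = c * Ifun nx i := by rw [hVd, hc]; try ring
      rw [hw]
      simp only []
      rw [hVdi, one_div, inv_mul_eq_div]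
    have hinner : ∑ r : Fin nx, (w (k,j,r.succ) - w (k,j,r.castSucc))^2
        = ∑ r : Fin nx, (v (k,j,r.succ) / Real.sqrt (c * Ifun nx r.succ)
            - v (k,j,r.castSucc) / Real.sqrt (c * Ifun nx r.castSucc))^2 :=
      Finset.sum_congr rfl fun r _ => by rw [hwd, hwd]
    have hsb := slice_bound nx c hcpos (fun i => v (k,j,i))
    calc (Δy*Δz/Δx) * (Ifun nz k * Ifun ny j *
          ∑ r : Fin nx, (w (k,j,r.succ) - w (k,j,r.castSucc))^2)
        = (1/Δx^2) * (c * ∑ r : Fin nx, (v (k,j,r.succ) / Real.sqrt (c * Ifun nx r.succ)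
            - v (k,j,r.castSucc) / Real.sqrt (c * Ifun nx r.castSucc))^2) := by
          rw [hinner, hc]; field_simp; try ring
      _ ≤ (1/Δx^2) * (4 * ∑ i, (v (k,j,i))^2) :=
          mul_le_mul_of_nonneg_left hsb (by positivity)
      _ = 4/Δx^2 * ∑ i, (v (k,j,i))^2 := by ring
  have hT2le : (Δx*Δz/Δy) * Q2 ≤ 4/Δy^2 * S := by
    rw [hQ2eq, hSy, Finset.mul_sum, Finset.mul_sum]
    refine Finset.sum_le_sum fun k _ => ?_
    rw [Finset.mul_sum, Finset.mul_sum]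
    refine Finset.sum_le_sum fun i _ => ?_
    have hIz := Ifun_pos nz k; have hIx := Ifun_pos nx i
    set c : ℝ := Δx*Δy*Δz*Ifun nz k*Ifun nx i with hc
    have hcpos : 0 < c := by rw [hc]; positivity
    have hwd : ∀ j : Fin (ny+1), w (k,j,i) = v (k,j,i) / Real.sqrt (c * Ifun ny j) := by
      intro j
      have hVdi : Vd (k,j,i) = c * Ifun ny j := by rw [hVd, hc]; try ring
      rw [hw]
      simp only []
      rw [hVdi, one_div, inv_mul_eq_div]
    have hinner : ∑ r : Fin ny, (w (k,r.succ,i) - w (k,r.castSucc,i))^2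
        = ∑ r : Fin ny, (v (k,r.succ,i) / Real.sqrt (c * Ifun ny r.succ)
            - v (k,r.castSucc,i) / Real.sqrt (c * Ifun ny r.castSucc))^2 :=
      Finset.sum_congr rfl fun r _ => by rw [hwd, hwd]
    have hsb := slice_bound ny c hcpos (fun j => v (k,j,i))
    calc (Δx*Δz/Δy) * (Ifun nz k * Ifun nx i *
          ∑ r : Fin ny, (w (k,r.succ,i) - w (k,r.castSucc,i))^2)
        = (1/Δy^2) * (c * ∑ r : Fin ny, (v (k,r.succ,i) / Real.sqrt (c * Ifun ny r.succ)
            - v (k,r.castSucc,i) / Real.sqrt (c * Ifun ny r.castSucc))^2) := by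
          rw [hinner, hc]; field_simp; try ring
      _ ≤ (1/Δy^2) * (4 * ∑ j, (v (k,j,i))^2) :=
          mul_le_mul_of_nonneg_left hsb (by positivity)
      _ = 4/Δy^2 * ∑ j, (v (k,j,i))^2 := by ring
  have hT3le : (Δx*Δy/Δz) * Q3 ≤ 4/Δz^2 * S := by
    rw [hQ3eq, hSz, Finset.mul_sum, Finset.mul_sum]
    refine Finset.sum_le_sum fun j _ => ?_
    rw [Finset.mul_sum, Finset.mul_sum]
    refine Finset.sum_le_sum fun i _ => ?_
    have hIy := Ifun_pos ny j; have hIx := Ifun_pos nx i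
    set c : ℝ := Δx*Δy*Δz*Ifun ny j*Ifun nx i with hc
    have hcpos : 0 < c := by rw [hc]; positivity
    have hwd : ∀ k : Fin (nz+1), w (k,j,i) = v (k,j,i) / Real.sqrt (c * Ifun nz k) := by
      intro k
      have hVdi : Vd (k,j,i) = c * Ifun nz k := by rw [hVd, hc]; try ring
      rw [hw]
      simp only []
      rw [hVdi, one_div, inv_mul_eq_div]
    have hinner : ∑ r : Fin nz, (w (r.succ,j,i) - w (r.castSucc,j,i))^2
        = ∑ r : Fin nz, (v (r.succ,j,i) / Real.sqrt (c * Ifun nz r.succ)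
            - v (r.castSucc,j,i) / Real.sqrt (c * Ifun nz r.castSucc))^2 :=
      Finset.sum_congr rfl fun r _ => by rw [hwd, hwd]
    have hsb := slice_bound nz c hcpos (fun k => v (k,j,i))
    calc (Δx*Δy/Δz) * (Ifun ny j * Ifun nx i *
          ∑ r : Fin nz, (w (r.succ,j,i) - w (r.castSucc,j,i))^2)
        = (1/Δz^2) * (c * ∑ r : Fin nz, (v (r.succ,j,i) / Real.sqrt (c * Ifun nz r.succ)
            - v (r.castSucc,j,i) / Real.sqrt (c * Ifun nz r.castSucc))^2) := by
          rw [hinner, hc]; field_simp; try ring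
      _ ≤ (1/Δz^2) * (4 * ∑ k, (v (k,j,i))^2) :=
          mul_le_mul_of_nonneg_left hsb (by positivity)
      _ = 4/Δz^2 * ∑ k, (v (k,j,i))^2 := by ring
  -- potential term
  have hQUeq : QU = ∑ p, U p * (v p)^2 := by
    rw [hQU, hVsec, Matrix.diagonal_mul_diagonal]
    simp only [dotProduct, Matrix.mulVec_diagonal]
    refine Finset.sum_congr rfl fun p _ => ?_
    have hwp : w p = v p / Real.sqrt (Vd p) := by
      rw [hw]; simp only []; rw [one_div, inv_mul_eq_div]
    have h1 : Real.sqrt (Vd p) ^ 2 = Vd p := Real.sq_sqrt (hVdpos p).le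
    have hkey : v p / Real.sqrt (Vd p) * ((Vd p * U p) * (v p / Real.sqrt (Vd p)))
        = U p * (v p)^2 * (Vd p / Real.sqrt (Vd p)^2) := by ring
    rw [hwp, hkey, h1, div_self (hVdpos p).ne', mul_one]
  have hQUle : |QU| ≤ MU * S := by
    rw [hQUeq]
    calc |∑ p, U p * (v p)^2| ≤ ∑ p, |U p * (v p)^2| := Finset.abs_sum_le_sum_abs _ _
      _ ≤ ∑ p, MU * (v p)^2 := Finset.sum_le_sum fun p _ => by
          rw [abs_mul, abs_of_nonneg (sq_nonneg (v p))]
          exact mul_le_mul_of_nonneg_right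
            (Finset.le_sup' (fun p => |U p|) (Finset.mem_univ p)) (sq_nonneg _)
      _ = MU * S := by rw [hS, Finset.mul_sum]
  -- assemble
  have hSnn : 0 ≤ S := Finset.sum_nonneg fun p _ => sq_nonneg _
  have hvvS : v ⬝ᵥ v = S := by rw [hS]; simp [dotProduct, sq]
  rw [hquad, hexp, hvvS]
  set K : ℝ := (ℏ^2/(2*m)) * ((Δy*Δz/Δx) * Q1 + (Δx*Δz/Δy) * Q2 + (Δx*Δy/Δz) * Q3) with hK
  have hKnn : 0 ≤ K := by
    rw [hK]
    refine mul_nonneg (by positivity) ?_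
    have h1 : 0 ≤ (Δy*Δz/Δx) * Q1 := mul_nonneg (by positivity) hQ1nn
    have h2 : 0 ≤ (Δx*Δz/Δy) * Q2 := mul_nonneg (by positivity) hQ2nn
    have h3 : 0 ≤ (Δx*Δy/Δz) * Q3 := mul_nonneg (by positivity) hQ3nn
    linarith
  have hKle : K ≤ (ℏ^2/(2*m)) * ((4/Δx^2 + 4/Δy^2 + 4/Δz^2) * S) := by
    rw [hK]
    refine mul_le_mul_of_nonneg_left ?_ (by positivity)
    calc (Δy*Δz/Δx) * Q1 + (Δx*Δz/Δy) * Q2 + (Δx*Δy/Δz) * Q3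
        ≤ 4/Δx^2 * S + 4/Δy^2 * S + 4/Δz^2 * S :=
          add_le_add (add_le_add hT1le hT2le) hT3le
      _ = (4/Δx^2 + 4/Δy^2 + 4/Δz^2) * S := by ring
  have habs : |(1/ℏ) * (K + QU)| ≤ (1/ℏ) * (K + |QU|) := by
    rw [abs_mul, abs_of_pos (by positivity : (0:ℝ) < 1/ℏ)]
    refine mul_le_mul_of_nonneg_left ?_ (by positivity)
    calc |K + QU| ≤ |K| + |QU| := abs_add_le _ _
      _ = K + |QU| := by rw [abs_of_nonneg hKnn]
  refine habs.trans ?_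
  have hfinal : (1/ℏ) * ((ℏ^2/(2*m)) * ((4/Δx^2 + 4/Δy^2 + 4/Δz^2) * S) + MU * S)
      = ((2*ℏ/m) * (1/Δx^2 + 1/Δy^2 + 1/Δz^2) + (1/ℏ) * MU) * S := by
    field_simp
    ring
  calc (1/ℏ) * (K + |QU|)
      ≤ (1/ℏ) * ((ℏ^2/(2*m)) * ((4/Δx^2 + 4/Δy^2 + 4/Δz^2) * S) + MU * S) := by
        refine mul_le_mul_of_nonneg_left (add_le_add hKle hQUle) (by positivity)
    _ = ((2*ℏ/m) * (1/Δx^2 + 1/Δy^2 + 1/Δz^2) + (1/ℏ) * MU) * S := hfinal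

end
end

section
/- (Appendix B, single-cell CFL bound, Lemma on a single primary cell.) Fix positive reals ℏ, m, Δx, Δy, Δz and a potential U : Fin 2 × Fin 2 × Fin 2 → ℝ on the 8 corners of a cell. Let Ŵ : Matrix (Fin 2) (Fin 2) ℝ := !![1, -1; -1, 1] and define Σcell := (ℏ/m) • ((1/Δx^2) • (1 ⊗ₖ 1 ⊗ₖ Ŵ) + (1/Δy^2) • (1 ⊗ₖ Ŵ ⊗ₖ 1) + (1/Δz^2) • (Ŵ ⊗ₖ 1 ⊗ₖ 1)) + (1/ℏ) • Matrix.diagonal U, where 1 denotes the 2×2 identity matrix and ⊗ₖ the Kronecker product with indices identified with Fin 2 × Fin 2 × Fin 2. Then every eigenvalue μ ∈ spectrum ℝ Σcell satisfies |μ| ≤ (2*ℏ/m) * (1/Δx^2 + 1/Δy^2 + 1/Δz^2) + (1/ℏ) * (max over the 8 corners c of |U c|); i.e., the single-cell conventional CFL limit is at most the single-cell generalized CFL limit. -/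
open Matrix Kronecker

noncomputable section

/-- The scaled single-cell FDTD-Q Hamiltonian `Σcell`. -/
def SgmCell (ℏ m Δx Δy Δz : ℝ) (U : Fin 2 × Fin 2 × Fin 2 → ℝ) :
    Matrix (Fin 2 × Fin 2 × Fin 2) (Fin 2 × Fin 2 × Fin 2) ℝ :=
  (ℏ/m) • ((1/Δx^2) • kron3 (1 : Matrix (Fin 2) (Fin 2) ℝ) (1 : Matrix (Fin 2) (Fin 2) ℝ)
        (!![1, -1; -1, 1])
    + (1/Δy^2) • kron3 (1 : Matrix (Fin 2) (Fin 2) ℝ) (!![1, -1; -1, 1])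
        (1 : Matrix (Fin 2) (Fin 2) ℝ)
    + (1/Δz^2) • kron3 (!![1, -1; -1, 1]) (1 : Matrix (Fin 2) (Fin 2) ℝ)
        (1 : Matrix (Fin 2) (Fin 2) ℝ))
  + (1/ℏ) • Matrix.diagonal U

set_option maxHeartbeats 1000000 in
/-- Appendix B, single-cell CFL bound: every eigenvalue of `Σcell` is bounded in
absolute value by `(2ℏ/m)(1/Δx² + 1/Δy² + 1/Δz²) + (1/ℏ)·max |U|`, i.e. the
single-cell conventional CFL limit is at most the single-cell generalized CFL limit. -/
theorem fdtdq_single_cell_CFL_bound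
    (ℏ m Δx Δy Δz : ℝ) (hℏ : 0 < ℏ) (hm : 0 < m)
    (hΔx : 0 < Δx) (hΔy : 0 < Δy) (hΔz : 0 < Δz)
    (U : Fin 2 × Fin 2 × Fin 2 → ℝ) :
    ∀ μ ∈ spectrum ℝ (SgmCell ℏ m Δx Δy Δz U),
      |μ| ≤ (2*ℏ/m) * (1/Δx^2 + 1/Δy^2 + 1/Δz^2)
        + (1/ℏ) * (Finset.univ.sup' Finset.univ_nonempty
            (fun c : Fin 2 × Fin 2 × Fin 2 => |U c|)) := by
  intro μ hμ
  set A := SgmCell ℏ m Δx Δy Δz U with hA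
  have hev : Module.End.HasEigenvalue (Matrix.toLin' A) μ := by
    rw [Module.End.hasEigenvalue_iff_mem_spectrum]
    rwa [← AlgEquiv.spectrum_eq (Matrix.toLinAlgEquiv' : Matrix _ _ ℝ ≃ₐ[ℝ] _) A] at hμ
  obtain ⟨k, hk⟩ := eigenvalue_mem_ball hev
  rw [Metric.mem_closedBall, Real.dist_eq] at hk
  have h1 : |μ| ≤ ∑ j : Fin 2 × Fin 2 × Fin 2, ‖A k j‖ := by
    have h2 : |μ| ≤ |μ - A k k| + ‖A k k‖ := by
      rw [Real.norm_eq_abs]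
      have := abs_sub_abs_le_abs_sub μ (A k k)
      linarith [abs_abs (A k k)]
    refine h2.trans ?_
    rw [← Finset.add_sum_erase Finset.univ _ (Finset.mem_univ k)]
    linarith [hk]
  refine h1.trans ?_
  set sup := Finset.univ.sup' Finset.univ_nonempty
      (fun c : Fin 2 × Fin 2 × Fin 2 => |U c|) with hsup
  have key : ∀ j : Fin 2 × Fin 2 × Fin 2,
      |ℏ / m * ((Δx ^ 2)⁻¹ + (Δy ^ 2)⁻¹ + (Δz ^ 2)⁻¹) + ℏ⁻¹ * U j|
        ≤ ℏ / m * ((Δx ^ 2)⁻¹ + (Δy ^ 2)⁻¹ + (Δz ^ 2)⁻¹) + ℏ⁻¹ * sup := by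
    intro j
    have hUj : |U j| ≤ sup := Finset.le_sup' (fun c => |U c|) (Finset.mem_univ j)
    have h3 : |ℏ / m * ((Δx ^ 2)⁻¹ + (Δy ^ 2)⁻¹ + (Δz ^ 2)⁻¹)| =
        ℏ / m * ((Δx ^ 2)⁻¹ + (Δy ^ 2)⁻¹ + (Δz ^ 2)⁻¹) := abs_of_pos (by positivity)
    calc _ ≤ |ℏ / m * ((Δx ^ 2)⁻¹ + (Δy ^ 2)⁻¹ + (Δz ^ 2)⁻¹)| + |ℏ⁻¹ * U j| := abs_add_le _ _
      _ ≤ _ := by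
          rw [h3, abs_mul, abs_of_pos (by positivity : (0:ℝ) < ℏ⁻¹)]
          have : (0:ℝ) < ℏ⁻¹ := by positivity
          nlinarith
  have hax : |ℏ/m*(Δx^2)⁻¹| = ℏ/m*(Δx^2)⁻¹ := abs_of_pos (by positivity)
  have hay : |ℏ/m*(Δy^2)⁻¹| = ℏ/m*(Δy^2)⁻¹ := abs_of_pos (by positivity)
  have haz : |ℏ/m*(Δz^2)⁻¹| = ℏ/m*(Δz^2)⁻¹ := abs_of_pos (by positivity)
  obtain ⟨a, b, c⟩ := k
  have hxpos : (0:ℝ) < (Δx^2)⁻¹ := by positivity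
  have hypos : (0:ℝ) < (Δy^2)⁻¹ := by positivity
  have hzpos : (0:ℝ) < (Δz^2)⁻¹ := by positivity
  have hhm : (0:ℝ) < ℏ/m := by positivity
  fin_cases a <;> fin_cases b <;> fin_cases c <;>
    simp only [hA, SgmCell, kron3, Fintype.sum_prod_type, Fin.sum_univ_two,
      Matrix.add_apply, Matrix.smul_apply, Matrix.reindex_apply, Matrix.submatrix_apply,
      Equiv.prodAssoc, Equiv.coe_fn_symm_mk, Matrix.kroneckerMap_apply, Matrix.one_apply,
      Matrix.diagonal_apply, Real.norm_eq_abs, Prod.ext_iff, Fin.ext_iff] <;>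
    simp only [Matrix.cons_val', Matrix.cons_val_zero, Matrix.cons_val_one, Matrix.head_cons,
      Matrix.head_fin_const, Matrix.empty_val', Matrix.cons_val_fin_one, Fin.isValue,
      Fin.val_zero, Fin.val_one, one_div] <;>
    norm_num <;>
    rw [abs_of_pos hhm] <;>
    ring_nf at key ⊢ <;>
    linarith [key 0, key 1, key (0,0,1), key (0,1,0), key ((0:Fin 2),(1:Fin 2 × Fin 2)),
      key ((1:Fin 2),(0:Fin 2 × Fin 2)), key (1,0,1), key (1,1,0),
      key (0,1,1), key (1,0,0), key (1,1,1), key (0,0,0)]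


end
end

section
/- (Eigenstructure of the single-cell Kronecker stiffness matrix, key step in the single-cell CFL bound.) Let Ŵ : Matrix (Fin 2) (Fin 2) ℝ := !![1, -1; -1, 1] and let a, b, c be nonnegative reals. Define A := a • (1 ⊗ₖ 1 ⊗ₖ Ŵ) + b • (1 ⊗ₖ Ŵ ⊗ₖ 1) + c • (Ŵ ⊗ₖ 1 ⊗ₖ 1), a real matrix indexed by Fin 2 × Fin 2 × Fin 2, where 1 is the 2×2 identity and ⊗ₖ the Kronecker product. Then A is symmetric positive semidefinite, every eigenvalue μ ∈ spectrum ℝ A satisfies 0 ≤ μ ≤ 2*(a + b + c), and 2*(a + b + c) ∈ spectrum ℝ A. -/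
open Matrix Kronecker

noncomputable section

lemma kron3_apply_s11 {α β γ : Type*} (A : Matrix α α ℝ) (B : Matrix β β ℝ) (C : Matrix γ γ ℝ)
    (i i' : α) (j j' : β) (k k' : γ) :
    kron3 A B C (i, j, k) (i', j', k') = A i i' * B j j' * C k k' := rfl

lemma kron3_isHermitian {α β γ : Type*} {A : Matrix α α ℝ} {B : Matrix β β ℝ}
    {C : Matrix γ γ ℝ} (hA : Aᵀ = A) (hB : Bᵀ = B) (hC : Cᵀ = C) :
    (kron3 A B C).IsHermitian := by
  ext ⟨i, j, k⟩ ⟨i', j', k'⟩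
  simp only [conjTranspose_apply, star_trivial, kron3_apply_s11]
  rw [show A i' i = A i i' from (congrFun (congrFun hA i) i'),
      show B j' j = B j j' from (congrFun (congrFun hB j) j'),
      show C k' k = C k k' from (congrFun (congrFun hC k) k')]

set_option maxHeartbeats 2000000 in
/-- Eigenstructure of the single-cell Kronecker stiffness matrix: with
`Ŵ = !![1,-1;-1,1]` and nonnegative weights `a, b, c`, the matrix
`A = a•(1⊗1⊗Ŵ) + b•(1⊗Ŵ⊗1) + c•(Ŵ⊗1⊗1)` is symmetric positive semidefinite,
its eigenvalues lie in `[0, 2(a+b+c)]`, and `2(a+b+c)` is an eigenvalue. -/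
theorem fdtdq_single_cell_stiffness_eigenstructure
    (a b c : ℝ) (ha : 0 ≤ a) (hb : 0 ≤ b) (hc : 0 ≤ c) :
    (a • kron3 (1 : Matrix (Fin 2) (Fin 2) ℝ) (1 : Matrix (Fin 2) (Fin 2) ℝ) (!![1, -1; -1, 1])
      + b • kron3 (1 : Matrix (Fin 2) (Fin 2) ℝ) (!![1, -1; -1, 1]) (1 : Matrix (Fin 2) (Fin 2) ℝ)
      + c • kron3 (!![1, -1; -1, 1]) (1 : Matrix (Fin 2) (Fin 2) ℝ)
          (1 : Matrix (Fin 2) (Fin 2) ℝ)).PosSemidef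
    ∧ (∀ μ ∈ spectrum ℝ
        (a • kron3 (1 : Matrix (Fin 2) (Fin 2) ℝ) (1 : Matrix (Fin 2) (Fin 2) ℝ) (!![1, -1; -1, 1])
          + b • kron3 (1 : Matrix (Fin 2) (Fin 2) ℝ) (!![1, -1; -1, 1]) (1 : Matrix (Fin 2) (Fin 2) ℝ)
          + c • kron3 (!![1, -1; -1, 1]) (1 : Matrix (Fin 2) (Fin 2) ℝ)
              (1 : Matrix (Fin 2) (Fin 2) ℝ)),
        0 ≤ μ ∧ μ ≤ 2*(a + b + c))
    ∧ (2*(a + b + c)) ∈ spectrum ℝ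
        (a • kron3 (1 : Matrix (Fin 2) (Fin 2) ℝ) (1 : Matrix (Fin 2) (Fin 2) ℝ) (!![1, -1; -1, 1])
          + b • kron3 (1 : Matrix (Fin 2) (Fin 2) ℝ) (!![1, -1; -1, 1]) (1 : Matrix (Fin 2) (Fin 2) ℝ)
          + c • kron3 (!![1, -1; -1, 1]) (1 : Matrix (Fin 2) (Fin 2) ℝ)
              (1 : Matrix (Fin 2) (Fin 2) ℝ)) := by
  set M : Matrix (Fin 2 × Fin 2 × Fin 2) (Fin 2 × Fin 2 × Fin 2) ℝ :=
    a • kron3 (1 : Matrix (Fin 2) (Fin 2) ℝ) (1 : Matrix (Fin 2) (Fin 2) ℝ) (!![1, -1; -1, 1])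
      + b • kron3 (1 : Matrix (Fin 2) (Fin 2) ℝ) (!![1, -1; -1, 1]) (1 : Matrix (Fin 2) (Fin 2) ℝ)
      + c • kron3 (!![1, -1; -1, 1]) (1 : Matrix (Fin 2) (Fin 2) ℝ)
          (1 : Matrix (Fin 2) (Fin 2) ℝ) with hMdef
  have hW : (!![1, -1; -1, 1] : Matrix (Fin 2) (Fin 2) ℝ)ᵀ = !![1, -1; -1, 1] := by
    ext i j; fin_cases i <;> fin_cases j <;> rfl
  have h1 : (1 : Matrix (Fin 2) (Fin 2) ℝ)ᵀ = 1 := Matrix.transpose_one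
  have hherm : M.IsHermitian := by
    have hk1 := kron3_isHermitian h1 h1 hW
    have hk2 := kron3_isHermitian h1 hW h1
    have hk3 := kron3_isHermitian hW h1 h1
    replace hk1 := (Matrix.conjTranspose_eq_transpose_of_trivial _).symm.trans hk1
    replace hk2 := (Matrix.conjTranspose_eq_transpose_of_trivial _).symm.trans hk2
    replace hk3 := (Matrix.conjTranspose_eq_transpose_of_trivial _).symm.trans hk3
    show Mᴴ = M
    rw [Matrix.conjTranspose_eq_transpose_of_trivial, hMdef]
    simp [Matrix.transpose_add, Matrix.transpose_smul, hk1, hk2, hk3]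
  -- quadratic form identity
  have key : ∀ x : Fin 2 × Fin 2 × Fin 2 → ℝ, x ⬝ᵥ (M *ᵥ x) =
      a * ((x (0,0,0) - x (0,0,1))^2 + (x (0,1,0) - x (0,1,1))^2
        + (x (1,0,0) - x (1,0,1))^2 + (x (1,1,0) - x (1,1,1))^2)
      + b * ((x (0,0,0) - x (0,1,0))^2 + (x (0,0,1) - x (0,1,1))^2
        + (x (1,0,0) - x (1,1,0))^2 + (x (1,0,1) - x (1,1,1))^2)
      + c * ((x (0,0,0) - x (1,0,0))^2 + (x (0,0,1) - x (1,0,1))^2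
        + (x (0,1,0) - x (1,1,0))^2 + (x (0,1,1) - x (1,1,1))^2) := by
    intro x
    norm_num [hMdef, Matrix.add_mulVec, Matrix.smul_mulVec, dotProduct,
      Fintype.sum_prod_type, Fin.sum_univ_two, mulVec, Matrix.add_apply, Matrix.smul_apply,
      kron3_apply_s11, Matrix.one_apply, smul_eq_mul, Matrix.cons_val', Matrix.cons_val_zero,
      Matrix.cons_val_one, Matrix.head_cons, Matrix.head_fin_const, Matrix.empty_val',
      Matrix.cons_val_fin_one, Prod.mk.injEq, -Prod.mk_one_one, -Prod.mk_zero_zero]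
    ring
  have key2 : ∀ x : Fin 2 × Fin 2 × Fin 2 → ℝ,
      2*(a + b + c) * (x ⬝ᵥ x) - x ⬝ᵥ (M *ᵥ x) =
      a * ((x (0,0,0) + x (0,0,1))^2 + (x (0,1,0) + x (0,1,1))^2
        + (x (1,0,0) + x (1,0,1))^2 + (x (1,1,0) + x (1,1,1))^2)
      + b * ((x (0,0,0) + x (0,1,0))^2 + (x (0,0,1) + x (0,1,1))^2
        + (x (1,0,0) + x (1,1,0))^2 + (x (1,0,1) + x (1,1,1))^2)
      + c * ((x (0,0,0) + x (1,0,0))^2 + (x (0,0,1) + x (1,0,1))^2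
        + (x (0,1,0) + x (1,1,0))^2 + (x (0,1,1) + x (1,1,1))^2) := by
    intro x
    rw [key x]
    simp only [dotProduct, Fintype.sum_prod_type, Fin.sum_univ_two]
    ring
  have hpsd : M.PosSemidef := by
    refine Matrix.PosSemidef.of_dotProduct_mulVec_nonneg hherm fun x => ?_
    rw [star_trivial, key x]
    positivity
  refine ⟨hpsd, ?_, ?_⟩
  · intro μ hμ
    rw [spectrum.mem_iff, Algebra.algebraMap_eq_smul_one, Matrix.isUnit_iff_isUnit_det,
      isUnit_iff_ne_zero, not_not] at hμ
    obtain ⟨v, hv0, hv⟩ := (Matrix.exists_mulVec_eq_zero_iff.mpr hμ)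
    have hev : M *ᵥ v = μ • v := by
      have := hv
      rw [Matrix.sub_mulVec, Matrix.smul_mulVec, Matrix.one_mulVec, sub_eq_zero] at this
      exact this.symm
    have hnn : 0 ≤ v ⬝ᵥ v := by
      exact Finset.sum_nonneg fun i _ => mul_self_nonneg (v i)
    have hvv : 0 < v ⬝ᵥ v := by
      rcases hnn.lt_or_eq with h | h
      · exact h
      · exact absurd ((dotProduct_self_eq_zero).mp h.symm) hv0
    have hq : v ⬝ᵥ (M *ᵥ v) = μ * (v ⬝ᵥ v) := by
      rw [hev, dotProduct_smul, smul_eq_mul]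
    constructor
    · have h0 := hpsd.dotProduct_mulVec_nonneg v
      rw [star_trivial, hq] at h0
      nlinarith [h0, hvv]
    · have h1 : 0 ≤ 2*(a + b + c) * (v ⬝ᵥ v) - v ⬝ᵥ (M *ᵥ v) := by
        rw [key2 v]; positivity
      rw [hq] at h1
      nlinarith
  · -- eigenvector (1,-1)⊗(1,-1)⊗(1,-1)
    set v : Fin 2 × Fin 2 × Fin 2 → ℝ :=
      fun p => (![1,-1] p.1) * (![1,-1] p.2.1) * (![1,-1] p.2.2) with hvdef
    have hv0 : v ≠ 0 := by
      intro h
      have := congrFun h (0, 0, 0)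
      simp [hvdef] at this
    have hev : ((2*(a + b + c)) • (1 : Matrix (Fin 2 × Fin 2 × Fin 2) (Fin 2 × Fin 2 × Fin 2) ℝ)
        - M) *ᵥ v = 0 := by
      funext ⟨i, j, k⟩
      fin_cases i <;> fin_cases j <;> fin_cases k <;>
      · norm_num [hMdef, hvdef, Matrix.sub_mulVec, Matrix.add_mulVec,
          Matrix.smul_mulVec, Matrix.one_mulVec, mulVec, dotProduct,
          Fintype.sum_prod_type, Fin.sum_univ_two, kron3_apply_s11, Matrix.one_apply,
          Matrix.add_apply, Matrix.smul_apply, Matrix.sub_apply, Pi.zero_apply, smul_eq_mul,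
          Matrix.cons_val', Matrix.cons_val_zero, Matrix.cons_val_one, Matrix.head_cons,
          Matrix.head_fin_const, Matrix.empty_val', Matrix.cons_val_fin_one, Prod.mk.injEq,
          -Prod.mk_one_one, -Prod.mk_zero_zero]
        ring_nf
    rw [spectrum.mem_iff, Algebra.algebraMap_eq_smul_one, Matrix.isUnit_iff_isUnit_det,
      isUnit_iff_ne_zero, not_not]
    exact Matrix.exists_mulVec_eq_zero_iff.mp ⟨v, hv0, hev⟩

end
end

section
/- (Appendix B, Lemma: the minimum single-cell generalized CFL limit is at most the region's generalized CFL limit.) For the concrete 3-D FDTD-Q region, set Σc := (8/(ℏ*Δx*Δy*Δz)) • Hc for each cell c. Let Δt > 0 be such that for every cell c and every eigenvalue ν ∈ spectrum ℝ Σc, Δt * |ν| < 2. Then for every eigenvalue μ ∈ spectrum ℝ Σ, Δt * |μ| < 2. Equivalently, the minimum over all cells c of the single-cell generalized CFL limit 2/ρ(Σc) is at most the region's generalized CFL limit 2/ρ(Σ). -/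
open Matrix Kronecker

noncomputable section

/-- The corner node index `k + κ` inside `Fin (p+1)`. -/
def cornerIdx {p : ℕ} (k : Fin p) (κ : Fin 2) : Fin (p+1) :=
  ⟨k.val + κ.val, by have h1 := k.isLt; have h2 := κ.isLt; omega⟩

/-- Restriction of a nodal function to the 8 corners of the primary cell `c`. -/
def restr {nx ny nz : ℕ} (c : Fin nz × Fin ny × Fin nx) (ψ : Node nx ny nz → ℝ) :
    Fin 2 × Fin 2 × Fin 2 → ℝ :=
  fun q => ψ (cornerIdx c.1 q.1, cornerIdx c.2.1 q.2.1, cornerIdx c.2.2 q.2.2)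

/-- The 1-D single-cell stiffness matrix `Ŵ = W₁ᵀW₁`. -/
def What : Matrix (Fin 2) (Fin 2) ℝ := !![1, -1; -1, 1]

/-- The single-cell FDTD-Q Hamiltonian of the primary cell `c`. -/
def Hcell (nx ny nz : ℕ) (ℏ m Δx Δy Δz : ℝ) (U : Node nx ny nz → ℝ)
    (c : Fin nz × Fin ny × Fin nx) :
    Matrix (Fin 2 × Fin 2 × Fin 2) (Fin 2 × Fin 2 × Fin 2) ℝ :=
  (ℏ^2/(2*m)) • ((Δy*Δz/(4*Δx)) • kron3 (1 : Matrix (Fin 2) (Fin 2) ℝ)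
        (1 : Matrix (Fin 2) (Fin 2) ℝ) What
    + (Δx*Δz/(4*Δy)) • kron3 (1 : Matrix (Fin 2) (Fin 2) ℝ) What
        (1 : Matrix (Fin 2) (Fin 2) ℝ)
    + (Δx*Δy/(4*Δz)) • kron3 What (1 : Matrix (Fin 2) (Fin 2) ℝ)
        (1 : Matrix (Fin 2) (Fin 2) ℝ))
  + (Δx*Δy*Δz/8) • Matrix.diagonal (restr c U)

/-- The single-cell volume matrix. -/
def Vcell (Δx Δy Δz : ℝ) :
    Matrix (Fin 2 × Fin 2 × Fin 2) (Fin 2 × Fin 2 × Fin 2) ℝ :=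
  (Δx*Δy*Δz/8) • (1 : Matrix (Fin 2 × Fin 2 × Fin 2) (Fin 2 × Fin 2 × Fin 2) ℝ)


section Aux

/-- From membership in the matrix spectrum, extract an eigenvector. -/
lemma exists_eigenvector {N : Type*} [Fintype N] [DecidableEq N] (M : Matrix N N ℝ) (μ : ℝ)
    (h : μ ∈ spectrum ℝ M) : ∃ x : N → ℝ, x ≠ 0 ∧ M *ᵥ x = μ • x := by
  rw [spectrum.mem_iff, Matrix.isUnit_iff_isUnit_det, isUnit_iff_ne_zero, not_ne_iff,
    ← Matrix.exists_mulVec_eq_zero_iff] at h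
  obtain ⟨v, hv, heq⟩ := h
  refine ⟨v, hv, ?_⟩
  have h2 : (algebraMap ℝ (Matrix N N ℝ)) μ *ᵥ v - M *ᵥ v = 0 := by
    rw [← Matrix.sub_mulVec]; exact heq
  have h3 : (algebraMap ℝ (Matrix N N ℝ)) μ *ᵥ v = μ • v := by
    rw [Algebra.algebraMap_eq_smul_one, Matrix.smul_mulVec, Matrix.one_mulVec]
  rw [h3] at h2
  exact (sub_eq_zero.mp h2).symm

/-- Rayleigh-type bound from a bound on all eigenvalues of a hermitian real matrix. -/
lemma abs_quadform_le {N : Type*} [Fintype N] [DecidableEq N] {M : Matrix N N ℝ}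
    (hM : M.IsHermitian) {ρ : ℝ} (hρ : ∀ i, |hM.eigenvalues i| ≤ ρ) (x : N → ℝ) :
    |x ⬝ᵥ (M *ᵥ x)| ≤ ρ * (x ⬝ᵥ x) := by
  have hU := Matrix.mem_unitaryGroup_iff.mp hM.eigenvectorUnitary.2
  set U : Matrix N N ℝ := (hM.eigenvectorUnitary : Matrix N N ℝ) with hUdef
  have hstar : star U = Uᵀ := by
    rw [Matrix.star_eq_conjTranspose, Matrix.conjTranspose_eq_transpose_of_trivial]
  set y : N → ℝ := Uᵀ *ᵥ x with hy
  have hDiag : (Matrix.diagonal (RCLike.ofReal ∘ hM.eigenvalues) : Matrix N N ℝ)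
      = Matrix.diagonal hM.eigenvalues := by
    congr 1
  have h1 : x ⬝ᵥ (M *ᵥ x) = ∑ i, hM.eigenvalues i * (y i)^2 := by
    conv_lhs => rw [hM.spectral_theorem]
    rw [Unitary.conjStarAlgAut_apply, ← hUdef, hstar, hDiag, ← Matrix.mulVec_mulVec, ← Matrix.mulVec_mulVec,
      Matrix.dotProduct_mulVec, ← Matrix.mulVec_transpose]
    simp only [← hy, Matrix.mulVec_diagonal, dotProduct]
    exact Finset.sum_congr rfl fun i _ => by ring
  have h2 : x ⬝ᵥ x = ∑ i, (y i)^2 := by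
    have : y ⬝ᵥ y = x ⬝ᵥ x := by
      rw [hy, Matrix.dotProduct_mulVec, ← Matrix.mulVec_transpose, Matrix.transpose_transpose,
        Matrix.mulVec_mulVec]
      rw [← hstar, hU, Matrix.one_mulVec]
    rw [← this, dotProduct]
    exact Finset.sum_congr rfl fun i _ => by ring
  rw [h1, h2, Finset.mul_sum]
  refine (Finset.abs_sum_le_sum_abs _ _).trans (Finset.sum_le_sum fun i _ => ?_)
  rw [abs_mul, abs_of_nonneg (sq_nonneg (y i))]
  exact mul_le_mul_of_nonneg_right (hρ i) (sq_nonneg _)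

end Aux
/-- 1-D corner indicator. -/
def ind1 {p : ℕ} (k : Fin p) (κ : Fin 2) (a : Fin (p+1)) : ℝ :=
  if cornerIdx k κ = a then 1 else 0

lemma cornerIdx_zero {p : ℕ} (k : Fin p) : cornerIdx k (0 : Fin 2) = Fin.castSucc k := by
  apply Fin.ext; simp [cornerIdx]

lemma cornerIdx_one {p : ℕ} (k : Fin p) : cornerIdx k (1 : Fin 2) = Fin.succ k := by
  apply Fin.ext; simp [cornerIdx]

lemma fin_sum_ite_val (p v : ℕ) :
    (∑ k : Fin p, if (k : ℕ) = v then (1:ℝ) else 0) = if v < p then 1 else 0 := by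
  by_cases h : v < p
  · rw [if_pos h, Finset.sum_eq_single_of_mem (⟨v, h⟩ : Fin p) (Finset.mem_univ _)
      (fun b _ hb => if_neg (fun hb' => hb (Fin.ext hb'))), if_pos rfl]
  · rw [if_neg h]
    refine Finset.sum_eq_zero fun k _ => ?_
    have hk := k.isLt
    rw [if_neg]; omega

lemma fin_sum_ite_val' (p v : ℕ) :
    (∑ k : Fin p, if (k : ℕ) + 1 = v then (1:ℝ) else 0) = if 1 ≤ v ∧ v ≤ p then 1 else 0 := by
  by_cases h : 1 ≤ v ∧ v ≤ p
  · rw [if_pos h, Finset.sum_eq_single_of_mem (⟨v - 1, by omega⟩ : Fin p) (Finset.mem_univ _)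
      (fun b _ hb => if_neg (fun hb' => hb (Fin.ext (show (b : ℕ) = v - 1 by omega)))),
      if_pos (show (v - 1) + 1 = v by omega)]
  · rw [if_neg h]
    refine Finset.sum_eq_zero fun k _ => ?_
    have hk := k.isLt
    rw [if_neg]; omega

lemma ind1_sum_eq {p : ℕ} (k : Fin p) (a : Fin (p+1)) :
    (∑ κ : Fin 2, ind1 k κ a)
      = (if (k : ℕ) = (a : ℕ) then (1:ℝ) else 0) + (if (k : ℕ) + 1 = (a : ℕ) then 1 else 0) := by
  rw [Fin.sum_univ_two]
  unfold ind1
  congr 1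
  · congr 1
    rw [eq_iff_iff, Fin.ext_iff]
    simp [cornerIdx]
  · congr 1
    rw [eq_iff_iff, Fin.ext_iff]
    simp [cornerIdx]

lemma count1 {p : ℕ} (hp : 0 < p) (a : Fin (p+1)) :
    (∑ k : Fin p, ∑ κ : Fin 2, ind1 k κ a) = 2 * Itl p a a := by
  rw [Finset.sum_congr rfl (fun k _ => ind1_sum_eq k a), Finset.sum_add_distrib,
    fin_sum_ite_val, fin_sum_ite_val', Itl, Matrix.diagonal_apply_eq]
  have ha := a.isLt
  have e1 : (a = 0 ∨ a = Fin.last p) ↔ ((a : ℕ) = 0 ∨ (a : ℕ) = p) := by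
    rw [Fin.ext_iff, Fin.ext_iff]
    simp
  rw [if_congr e1 rfl rfl]
  split_ifs <;> norm_num <;> omega

/-- 1-D assembly for the 2×2 identity. -/
lemma assemble1_one {p : ℕ} (hp : 0 < p) (a b : Fin (p+1)) :
    (∑ k : Fin p, ∑ κ : Fin 2, ∑ κ' : Fin 2,
      ind1 k κ a * (1 : Matrix (Fin 2) (Fin 2) ℝ) κ κ' * ind1 k κ' b)
      = 2 * Itl p a b := by
  have key : ∀ k : Fin p, (∑ κ : Fin 2, ∑ κ' : Fin 2,
      ind1 k κ a * (1 : Matrix (Fin 2) (Fin 2) ℝ) κ κ' * ind1 k κ' b)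
      = ind1 k 0 a * ind1 k 0 b + ind1 k 1 a * ind1 k 1 b := by
    intro k
    simp [Fin.sum_univ_two, Matrix.one_apply]
  rw [Finset.sum_congr rfl (fun k _ => key k)]
  by_cases hab : a = b
  · subst hab
    have hsq : ∀ (k : Fin p) (κ : Fin 2), ind1 k κ a * ind1 k κ a = ind1 k κ a := by
      intro k κ; unfold ind1; split_ifs <;> ring
    calc (∑ k : Fin p, (ind1 k 0 a * ind1 k 0 a + ind1 k 1 a * ind1 k 1 a))
        = ∑ k : Fin p, ∑ κ : Fin 2, ind1 k κ a := by
          refine Finset.sum_congr rfl fun k _ => ?_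
          rw [Fin.sum_univ_two, hsq, hsq]
      _ = 2 * Itl p a a := count1 hp a
  · have hz : ∀ (k : Fin p) (κ : Fin 2), ind1 k κ a * ind1 k κ b = 0 := by
      intro k κ; unfold ind1
      by_cases h1 : cornerIdx k κ = a
      · by_cases h2 : cornerIdx k κ = b
        · exact absurd (h1 ▸ h2) hab
        · simp [h1, h2, hab]
      · simp [h1]
    simp only [hz, add_zero]
    rw [Finset.sum_const_zero, Itl, Matrix.diagonal_apply_ne _ hab, mul_zero]

lemma wmat_eq {p : ℕ} (k : Fin p) (a : Fin (p+1)) :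
    Wmat p k a = ind1 k 1 a - ind1 k 0 a := by
  have hne : Fin.castSucc k ≠ Fin.succ k := by
    simp only [ne_eq, Fin.ext_iff, Fin.coe_castSucc, Fin.val_succ]
    omega
  simp only [Wmat, Matrix.of_apply, ind1, cornerIdx_zero, cornerIdx_one]
  by_cases h1 : a = Fin.castSucc k <;> by_cases h2 : a = Fin.succ k <;>
    simp_all [eq_comm]
lemma amat_apply {p : ℕ} (a b : Fin (p+1)) :
    Amat p a b = ∑ k : Fin p, Wmat p k a * Wmat p k b := by
  simp [Amat, Matrix.mul_apply, Matrix.transpose_apply]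

/-- 1-D assembly for `Ŵ`. -/
lemma assemble1_What {p : ℕ} (a b : Fin (p+1)) :
    (∑ k : Fin p, ∑ κ : Fin 2, ∑ κ' : Fin 2, ind1 k κ a * What κ κ' * ind1 k κ' b)
      = Amat p a b := by
  rw [amat_apply]
  refine Finset.sum_congr rfl fun k _ => ?_
  rw [wmat_eq, wmat_eq]
  simp only [Fin.sum_univ_two, What]
  norm_num [Matrix.cons_val_zero, Matrix.cons_val_one, Matrix.head_cons]
  ring

/-- 3-D corner node of a cell. -/
def corner {nx ny nz : ℕ} (c : Fin nz × Fin ny × Fin nx) (q : Fin 2 × Fin 2 × Fin 2) :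
    Node nx ny nz :=
  (cornerIdx c.1 q.1, cornerIdx c.2.1 q.2.1, cornerIdx c.2.2 q.2.2)

lemma restr_eq {nx ny nz : ℕ} (c : Fin nz × Fin ny × Fin nx) (ψ : Node nx ny nz → ℝ)
    (q : Fin 2 × Fin 2 × Fin 2) : restr c ψ q = ψ (corner c q) := rfl

/-- 3-D corner indicator. -/
def ind3 {nx ny nz : ℕ} (c : Fin nz × Fin ny × Fin nx) (q : Fin 2 × Fin 2 × Fin 2)
    (n : Node nx ny nz) : ℝ :=
  if corner c q = n then 1 else 0

lemma ind3_eq {nx ny nz : ℕ} (c : Fin nz × Fin ny × Fin nx) (q : Fin 2 × Fin 2 × Fin 2)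
    (n : Node nx ny nz) :
    ind3 c q n = ind1 c.1 q.1 n.1 * ind1 c.2.1 q.2.1 n.2.1 * ind1 c.2.2 q.2.2 n.2.2 := by
  unfold ind3 ind1 corner
  by_cases h1 : cornerIdx c.1 q.1 = n.1 <;>
    by_cases h2 : cornerIdx c.2.1 q.2.1 = n.2.1 <;>
      by_cases h3 : cornerIdx c.2.2 q.2.2 = n.2.2 <;>
        simp [h1, h2, h3, Prod.ext_iff]

lemma kron3_apply_s13 {α β γ : Type*} (A : Matrix α α ℝ) (B : Matrix β β ℝ) (C : Matrix γ γ ℝ)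
    (x y : α × β × γ) :
    kron3 A B C x y = A x.1 y.1 * B x.2.1 y.2.1 * C x.2.2 y.2.2 := rfl

lemma sum3_mul {A B C : Type*} [Fintype A] [Fintype B] [Fintype C]
    (f : A → ℝ) (g : B → ℝ) (h : C → ℝ) :
    (∑ a, f a) * (∑ b, g b) * (∑ c, h c) = ∑ a, ∑ b, ∑ c, f a * g b * h c := by
  rw [Fintype.sum_mul_sum, Fintype.sum_mul_sum]
  refine Finset.sum_congr rfl fun a _ => ?_
  simp only [Finset.sum_mul]
  exact Finset.sum_comm

/-- Factorization of a sum over triple-product index types. -/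
lemma sum_factor3 {α₁ α₂ α₃ β₁ β₂ β₃ : Type*} [Fintype α₁] [Fintype α₂] [Fintype α₃]
    [Fintype β₁] [Fintype β₂] [Fintype β₃]
    (F : α₁ → β₁ → β₁ → ℝ) (G : α₂ → β₂ → β₂ → ℝ) (H : α₃ → β₃ → β₃ → ℝ) :
    (∑ c : α₁ × α₂ × α₃, ∑ q : β₁ × β₂ × β₃, ∑ q' : β₁ × β₂ × β₃,
       F c.1 q.1 q'.1 * G c.2.1 q.2.1 q'.2.1 * H c.2.2 q.2.2 q'.2.2)
    = (∑ k : α₁, ∑ κ : β₁, ∑ κ' : β₁, F k κ κ')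
      * (∑ k : α₂, ∑ κ : β₂, ∑ κ' : β₂, G k κ κ')
      * (∑ k : α₃, ∑ κ : β₃, ∑ κ' : β₃, H k κ κ') := by
  calc (∑ c : α₁ × α₂ × α₃, ∑ q : β₁ × β₂ × β₃, ∑ q' : β₁ × β₂ × β₃,
       F c.1 q.1 q'.1 * G c.2.1 q.2.1 q'.2.1 * H c.2.2 q.2.2 q'.2.2)
      = ∑ x : ((α₁ × α₂ × α₃) × (β₁ × β₂ × β₃) × (β₁ × β₂ × β₃)),
          F x.1.1 x.2.1.1 x.2.2.1 * G x.1.2.1 x.2.1.2.1 x.2.2.2.1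
            * H x.1.2.2 x.2.1.2.2 x.2.2.2.2 := by
        simp only [Fintype.sum_prod_type]
    _ = ∑ y : ((α₁ × β₁ × β₁) × (α₂ × β₂ × β₂) × (α₃ × β₃ × β₃)),
          F y.1.1 y.1.2.1 y.1.2.2 * G y.2.1.1 y.2.1.2.1 y.2.1.2.2
            * H y.2.2.1 y.2.2.2.1 y.2.2.2.2 :=
        Fintype.sum_equiv
          ⟨fun x => ((x.1.1, x.2.1.1, x.2.2.1), (x.1.2.1, x.2.1.2.1, x.2.2.2.1),
              (x.1.2.2, x.2.1.2.2, x.2.2.2.2)),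
            fun y => ((y.1.1, y.2.1.1, y.2.2.1), (y.1.2.1, y.2.1.2.1, y.2.2.2.1),
              (y.1.2.2, y.2.1.2.2, y.2.2.2.2)),
            fun x => rfl, fun y => rfl⟩ _ _ (fun x => rfl)
    _ = (∑ u : α₁ × β₁ × β₁, F u.1 u.2.1 u.2.2) * (∑ v : α₂ × β₂ × β₂, G v.1 v.2.1 v.2.2)
        * (∑ w : α₃ × β₃ × β₃, H w.1 w.2.1 w.2.2) := by
        rw [sum3_mul]
        simp only [Fintype.sum_prod_type]
    _ = (∑ k : α₁, ∑ κ : β₁, ∑ κ' : β₁, F k κ κ')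
      * (∑ k : α₂, ∑ κ : β₂, ∑ κ' : β₂, G k κ κ')
      * (∑ k : α₃, ∑ κ : β₃, ∑ κ' : β₃, H k κ κ') := by
        simp only [Fintype.sum_prod_type]

/-- Factorization of a double sum over triple-product index types. -/
lemma sum_factor2 {α₁ α₂ α₃ β₁ β₂ β₃ : Type*} [Fintype α₁] [Fintype α₂] [Fintype α₃]
    [Fintype β₁] [Fintype β₂] [Fintype β₃]
    (F : α₁ → β₁ → ℝ) (G : α₂ → β₂ → ℝ) (H : α₃ → β₃ → ℝ) :
    (∑ c : α₁ × α₂ × α₃, ∑ q : β₁ × β₂ × β₃,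
       F c.1 q.1 * G c.2.1 q.2.1 * H c.2.2 q.2.2)
    = (∑ k : α₁, ∑ κ : β₁, F k κ) * (∑ k : α₂, ∑ κ : β₂, G k κ)
      * (∑ k : α₃, ∑ κ : β₃, H k κ) := by
  calc (∑ c : α₁ × α₂ × α₃, ∑ q : β₁ × β₂ × β₃,
       F c.1 q.1 * G c.2.1 q.2.1 * H c.2.2 q.2.2)
      = ∑ x : ((α₁ × α₂ × α₃) × (β₁ × β₂ × β₃)),
          F x.1.1 x.2.1 * G x.1.2.1 x.2.2.1 * H x.1.2.2 x.2.2.2 := by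
        simp only [Fintype.sum_prod_type]
    _ = ∑ y : ((α₁ × β₁) × (α₂ × β₂) × (α₃ × β₃)),
          F y.1.1 y.1.2 * G y.2.1.1 y.2.1.2 * H y.2.2.1 y.2.2.2 :=
        Fintype.sum_equiv
          ⟨fun x => ((x.1.1, x.2.1), (x.1.2.1, x.2.2.1), (x.1.2.2, x.2.2.2)),
            fun y => ((y.1.1, y.2.1.1, y.2.2.1), (y.1.2, y.2.1.2, y.2.2.2)),
            fun x => rfl, fun y => rfl⟩ _ _ (fun x => rfl)
    _ = (∑ u : α₁ × β₁, F u.1 u.2) * (∑ v : α₂ × β₂, G v.1 v.2)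
        * (∑ w : α₃ × β₃, H w.1 w.2) := by
        rw [sum3_mul]
        simp only [Fintype.sum_prod_type]
    _ = (∑ k : α₁, ∑ κ : β₁, F k κ) * (∑ k : α₂, ∑ κ : β₂, G k κ)
      * (∑ k : α₃, ∑ κ : β₃, H k κ) := by
        simp only [Fintype.sum_prod_type]
variable {nx ny nz : ℕ}

/-- The restriction matrix of cell `c`. -/
def Rmat (c : Fin nz × Fin ny × Fin nx) :
    Matrix (Fin 2 × Fin 2 × Fin 2) (Node nx ny nz) ℝ :=
  Matrix.of fun q n => ind3 c q n

lemma triple_apply (c : Fin nz × Fin ny × Fin nx)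
    (M : Matrix (Fin 2 × Fin 2 × Fin 2) (Fin 2 × Fin 2 × Fin 2) ℝ) (n n' : Node nx ny nz) :
    ((Rmat c)ᵀ * M * Rmat c) n n'
      = ∑ q, ∑ q', ind3 c q n * M q q' * ind3 c q' n' := by
  simp only [Matrix.mul_apply, Matrix.transpose_apply, Finset.sum_mul, Rmat, Matrix.of_apply]
  rw [Finset.sum_comm]

lemma assemble_kron (Mz My Mx : Matrix (Fin 2) (Fin 2) ℝ) (n n' : Node nx ny nz) :
    (∑ c : Fin nz × Fin ny × Fin nx, ∑ q, ∑ q',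
      ind3 c q n * kron3 Mz My Mx q q' * ind3 c q' n')
    = (∑ k : Fin nz, ∑ κ : Fin 2, ∑ κ' : Fin 2, ind1 k κ n.1 * Mz κ κ' * ind1 k κ' n'.1)
      * (∑ k : Fin ny, ∑ κ : Fin 2, ∑ κ' : Fin 2, ind1 k κ n.2.1 * My κ κ' * ind1 k κ' n'.2.1)
      * (∑ k : Fin nx, ∑ κ : Fin 2, ∑ κ' : Fin 2, ind1 k κ n.2.2 * Mx κ κ' * ind1 k κ' n'.2.2) := by
  have key : ∀ (c : Fin nz × Fin ny × Fin nx) (q q' : Fin 2 × Fin 2 × Fin 2),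
      ind3 c q n * kron3 Mz My Mx q q' * ind3 c q' n'
      = (ind1 c.1 q.1 n.1 * Mz q.1 q'.1 * ind1 c.1 q'.1 n'.1)
        * (ind1 c.2.1 q.2.1 n.2.1 * My q.2.1 q'.2.1 * ind1 c.2.1 q'.2.1 n'.2.1)
        * (ind1 c.2.2 q.2.2 n.2.2 * Mx q.2.2 q'.2.2 * ind1 c.2.2 q'.2.2 n'.2.2) := by
    intro c q q'
    rw [ind3_eq, ind3_eq, kron3_apply_s13]
    ring
  simp only [key]
  exact sum_factor3 (fun k κ κ' => ind1 k κ n.1 * Mz κ κ' * ind1 k κ' n'.1)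
    (fun k κ κ' => ind1 k κ n.2.1 * My κ κ' * ind1 k κ' n'.2.1)
    (fun k κ κ' => ind1 k κ n.2.2 * Mx κ κ' * ind1 k κ' n'.2.2)

lemma count3 (hnx : 0 < nx) (hny : 0 < ny) (hnz : 0 < nz) (n : Node nx ny nz) :
    (∑ c : Fin nz × Fin ny × Fin nx, ∑ q : Fin 2 × Fin 2 × Fin 2, ind3 c q n)
    = (2 * Itl nz n.1 n.1) * (2 * Itl ny n.2.1 n.2.1) * (2 * Itl nx n.2.2 n.2.2) := by
  simp only [ind3_eq]
  rw [sum_factor2 (fun k κ => ind1 k κ n.1) (fun k κ => ind1 k κ n.2.1)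
    (fun k κ => ind1 k κ n.2.2), count1 hnz, count1 hny, count1 hnx]

lemma assemble_diag (hnx : 0 < nx) (hny : 0 < ny) (hnz : 0 < nz)
    (f : Node nx ny nz → ℝ) (n n' : Node nx ny nz) :
    (∑ c : Fin nz × Fin ny × Fin nx, ∑ q, ∑ q',
      ind3 c q n * Matrix.diagonal (restr c f) q q' * ind3 c q' n')
    = (if n = n' then 1 else 0) * f n
      * ((2 * Itl nz n.1 n.1) * (2 * Itl ny n.2.1 n.2.1) * (2 * Itl nx n.2.2 n.2.2)) := by
  have step1 : ∀ (c : Fin nz × Fin ny × Fin nx) (q : Fin 2 × Fin 2 × Fin 2),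
      (∑ q', ind3 c q n * Matrix.diagonal (restr c f) q q' * ind3 c q' n')
      = ind3 c q n * restr c f q * ind3 c q n' := by
    intro c q
    rw [Finset.sum_eq_single_of_mem q (Finset.mem_univ _)
      (fun b _ hb => by rw [Matrix.diagonal_apply_ne _ (Ne.symm hb)]; ring)]
    rw [Matrix.diagonal_apply_eq]
  have step2 : ∀ (c : Fin nz × Fin ny × Fin nx) (q : Fin 2 × Fin 2 × Fin 2),
      ind3 c q n * restr c f q * ind3 c q n'
      = (if n = n' then 1 else 0) * f n * ind3 c q n := by
    intro c q
    unfold ind3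
    rw [restr_eq]
    by_cases h : corner c q = n
    · rw [if_pos h, h]
      ring
    · rw [if_neg h]
      ring
  simp only [step1, step2, ← Finset.mul_sum]
  rw [count3 hnx hny hnz n]
/-- Assembly of the region Hamiltonian from the single-cell Hamiltonians. -/
lemma Hmat_assemble (hnx : 0 < nx) (hny : 0 < ny) (hnz : 0 < nz)
    (ℏ m Δx Δy Δz : ℝ) (U : Node nx ny nz → ℝ) :
    Hmat nx ny nz ℏ m Δx Δy Δz U
      = ∑ c : Fin nz × Fin ny × Fin nx,
          (Rmat c)ᵀ * Hcell nx ny nz ℏ m Δx Δy Δz U c * Rmat c := by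
  ext n n'
  rw [Matrix.sum_apply]
  simp only [triple_apply]
  have split : ∀ (c : Fin nz × Fin ny × Fin nx) (q q' : Fin 2 × Fin 2 × Fin 2),
      ind3 c q n * Hcell nx ny nz ℏ m Δx Δy Δz U c q q' * ind3 c q' n'
      = (ℏ^2/(2*m) * (Δy*Δz/(4*Δx)))
          * (ind3 c q n * kron3 (1 : Matrix (Fin 2) (Fin 2) ℝ) 1 What q q' * ind3 c q' n')
        + (ℏ^2/(2*m) * (Δx*Δz/(4*Δy)))
          * (ind3 c q n * kron3 (1 : Matrix (Fin 2) (Fin 2) ℝ) What 1 q q' * ind3 c q' n')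
        + (ℏ^2/(2*m) * (Δx*Δy/(4*Δz)))
          * (ind3 c q n * kron3 What (1 : Matrix (Fin 2) (Fin 2) ℝ) 1 q q' * ind3 c q' n')
        + (Δx*Δy*Δz/8)
          * (ind3 c q n * Matrix.diagonal (restr c U) q q' * ind3 c q' n') := by
    intro c q q'
    simp only [Hcell, Matrix.add_apply, Matrix.smul_apply, smul_eq_mul]
    ring
  simp only [split, Finset.sum_add_distrib, ← Finset.mul_sum]
  rw [assemble_kron, assemble_kron, assemble_kron, assemble_diag hnx hny hnz]
  simp only [assemble1_one hnz, assemble1_one hny, assemble1_one hnx, assemble1_What]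
  simp only [Hmat, Matrix.add_apply, Matrix.smul_apply, smul_eq_mul, kron3_apply_s13, Vsec,
    Matrix.diagonal_mul_diagonal, Matrix.diagonal_apply]
  by_cases hnn : n = n'
  · subst hnn
    rw [if_pos rfl, if_pos rfl]
    ring
  · rw [if_neg hnn, if_neg hnn]
    ring

/-- Assembly of the secondary-cell volume matrix from single-cell volume matrices. -/
lemma Vsec_assemble (hnx : 0 < nx) (hny : 0 < ny) (hnz : 0 < nz) (Δx Δy Δz : ℝ) :
    Vsec nx ny nz Δx Δy Δz
      = ∑ c : Fin nz × Fin ny × Fin nx, (Rmat c)ᵀ * Vcell Δx Δy Δz * Rmat c := by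
  ext n n'
  rw [Matrix.sum_apply]
  simp only [triple_apply]
  have split : ∀ (c : Fin nz × Fin ny × Fin nx) (q q' : Fin 2 × Fin 2 × Fin 2),
      ind3 c q n * Vcell Δx Δy Δz q q' * ind3 c q' n'
      = (Δx*Δy*Δz/8)
          * (ind3 c q n * Matrix.diagonal (restr c (fun _ => (1:ℝ))) q q' * ind3 c q' n') := by
    intro c q q'
    have h1 : Vcell Δx Δy Δz q q'
        = (Δx*Δy*Δz/8) * Matrix.diagonal (restr c (fun _ => (1:ℝ))) q q' := by
      simp only [Vcell, Matrix.smul_apply, Matrix.one_apply, Matrix.diagonal_apply,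
        smul_eq_mul, restr]
    rw [h1]; ring
  simp only [split, ← Finset.mul_sum]
  rw [assemble_diag hnx hny hnz]
  simp only [Vsec, Matrix.diagonal_apply]
  by_cases hnn : n = n'
  · subst hnn
    rw [if_pos rfl, if_pos rfl]
    ring
  · rw [if_neg hnn, if_neg hnn]
    ring

lemma Rmat_mulVec (c : Fin nz × Fin ny × Fin nx) (ψ : Node nx ny nz → ℝ) :
    Rmat c *ᵥ ψ = restr c ψ := by
  funext q
  simp only [Matrix.mulVec, dotProduct, Rmat, Matrix.of_apply, ind3]
  rw [restr_eq, Finset.sum_eq_single_of_mem (corner c q) (Finset.mem_univ _)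
    (fun b _ hb => by rw [if_neg (fun h => hb h.symm)]; ring), if_pos rfl, one_mul]

lemma sum_mulVec {N : Type*} [Fintype N] {C : Type*} [Fintype C]
    (M : C → Matrix N N ℝ) (v : N → ℝ) :
    (∑ c, M c) *ᵥ v = ∑ c, (M c *ᵥ v) := by
  funext i
  simp only [Matrix.mulVec, dotProduct, Matrix.sum_apply, Finset.sum_apply,
    Finset.sum_mul]
  exact Finset.sum_comm

/-- Quadratic-form version of assembly. -/
lemma quadform_sum (Ms : (Fin nz × Fin ny × Fin nx) →
      Matrix (Fin 2 × Fin 2 × Fin 2) (Fin 2 × Fin 2 × Fin 2) ℝ) (ψ : Node nx ny nz → ℝ) :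
    ψ ⬝ᵥ ((∑ c, (Rmat c)ᵀ * Ms c * Rmat c) *ᵥ ψ)
      = ∑ c, (restr c ψ) ⬝ᵥ (Ms c *ᵥ restr c ψ) := by
  rw [_root_.sum_mulVec]
  have hdot : ψ ⬝ᵥ (∑ c, ((Rmat c)ᵀ * Ms c * Rmat c) *ᵥ ψ)
      = ∑ c, ψ ⬝ᵥ (((Rmat c)ᵀ * Ms c * Rmat c) *ᵥ ψ) := by
    simp only [dotProduct, Finset.sum_apply, Finset.mul_sum]
    exact Finset.sum_comm
  rw [hdot]
  refine Finset.sum_congr rfl fun c _ => ?_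
  rw [← Matrix.mulVec_mulVec, ← Matrix.mulVec_mulVec, Matrix.dotProduct_mulVec,
    Matrix.vecMul_transpose, Rmat_mulVec]
lemma kron3_transpose {α β γ : Type*} (A : Matrix α α ℝ) (B : Matrix β β ℝ) (C : Matrix γ γ ℝ) :
    (kron3 A B C)ᵀ = kron3 Aᵀ Bᵀ Cᵀ := by
  ext x y; rfl

lemma What_transpose : Whatᵀ = What := by
  ext i j
  fin_cases i <;> fin_cases j <;> simp [What]

lemma Scell_isHermitian (ℏ m Δx Δy Δz r : ℝ) (U : Node nx ny nz → ℝ)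
    (c : Fin nz × Fin ny × Fin nx) :
    (r • Hcell nx ny nz ℏ m Δx Δy Δz U c).IsHermitian := by
  show _ᴴ = _
  rw [Matrix.conjTranspose_eq_transpose_of_trivial]
  simp only [Hcell, Matrix.transpose_smul, Matrix.transpose_add, kron3_transpose,
    Matrix.transpose_one, What_transpose, Matrix.diagonal_transpose]

lemma Itl_pos (p : ℕ) (a : Fin (p+1)) : 0 < Itl p a a := by
  rw [Itl, Matrix.diagonal_apply_eq]
  split_ifs <;> norm_num
/-- Appendix B of the paper: if the time step satisfies the single-cell generalized
CFL condition for every primary cell, then it satisfies the generalized CFL condition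
for the whole region; i.e. the minimum single-cell generalized CFL limit is at most
the region's generalized CFL limit. -/
theorem fdtdq_min_cell_CFL_le_region_CFL
    (nx ny nz : ℕ) (hnx : 0 < nx) (hny : 0 < ny) (hnz : 0 < nz)
    (ℏ m Δx Δy Δz : ℝ) (hℏ : 0 < ℏ) (hm : 0 < m)
    (hΔx : 0 < Δx) (hΔy : 0 < Δy) (hΔz : 0 < Δz)
    (Δt : ℝ) (hΔt : 0 < Δt)
    (U : Node nx ny nz → ℝ)
    (hcell : ∀ c : Fin nz × Fin ny × Fin nx,
      ∀ ν ∈ spectrum ℝ ((8/(ℏ*Δx*Δy*Δz)) • Hcell nx ny nz ℏ m Δx Δy Δz U c),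
        Δt * |ν| < 2) :
    ∀ μ ∈ spectrum ℝ (Sgm nx ny nz ℏ m Δx Δy Δz U), Δt * |μ| < 2 := by
  intro μ hμ
  obtain ⟨x, hx0, hxeig⟩ := exists_eigenvector _ μ hμ
  have hVpos : ∀ n : Node nx ny nz, 0 < Vsec nx ny nz Δx Δy Δz n n := by
    intro n
    rw [Vsec, Matrix.diagonal_apply_eq]
    have := Itl_pos nz n.1
    have := Itl_pos ny n.2.1
    have := Itl_pos nx n.2.2
    positivity
  set ψ : Node nx ny nz → ℝ := Dmat nx ny nz Δx Δy Δz *ᵥ x with hψ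
  have hxψ : ∀ n, x n = Real.sqrt (Vsec nx ny nz Δx Δy Δz n n) * ψ n := by
    intro n
    have hs : (0:ℝ) < Real.sqrt (Vsec nx ny nz Δx Δy Δz n n) :=
      Real.sqrt_pos.mpr (hVpos n)
    rw [hψ]
    show x n = _ * (Matrix.diagonal _ *ᵥ x) n
    rw [Matrix.mulVec_diagonal]
    field_simp
  -- the dot product of x with itself is positive
  have hdots : ∀ v : Node nx ny nz → ℝ, 0 ≤ v ⬝ᵥ v :=
    fun v => Finset.sum_nonneg fun i _ => mul_self_nonneg _
  have hxx : 0 < x ⬝ᵥ x := by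
    rcases lt_or_eq_of_le (hdots x) with h | h
    · exact h
    · exact absurd (dotProduct_self_eq_zero.mp h.symm) hx0
  -- symmetric diagonal: vecMul = mulVec
  have hDsym : ∀ v : Node nx ny nz → ℝ, v ᵥ* Dmat nx ny nz Δx Δy Δz
      = Dmat nx ny nz Δx Δy Δz *ᵥ v := by
    intro v
    funext i
    show (v ᵥ* Matrix.diagonal _) i = (Matrix.diagonal _ *ᵥ v) i
    rw [Matrix.vecMul_diagonal, Matrix.mulVec_diagonal]
    ring
  -- main identity 1
  have hid1 : μ * (x ⬝ᵥ x)
      = (1/ℏ) * ∑ c, (restr c ψ) ⬝ᵥ (Hcell nx ny nz ℏ m Δx Δy Δz U c *ᵥ restr c ψ) := by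
    have e1 : x ⬝ᵥ (Sgm nx ny nz ℏ m Δx Δy Δz U *ᵥ x) = μ * (x ⬝ᵥ x) := by
      rw [hxeig, dotProduct_smul, smul_eq_mul]
    rw [← e1, Sgm, Matrix.smul_mulVec, dotProduct_smul, smul_eq_mul,
      ← Matrix.mulVec_mulVec, ← Matrix.mulVec_mulVec, Matrix.dotProduct_mulVec, hDsym, ← hψ,
      Hmat_assemble hnx hny hnz, quadform_sum]
  -- main identity 2
  have hid2 : x ⬝ᵥ x = ∑ c, (restr c ψ) ⬝ᵥ (Vcell Δx Δy Δz *ᵥ restr c ψ) := by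
    rw [← quadform_sum, ← Vsec_assemble hnx hny hnz]
    have hVapply : ∀ n, (Vsec nx ny nz Δx Δy Δz *ᵥ ψ) n
        = Vsec nx ny nz Δx Δy Δz n n * ψ n := by
      intro n
      show (Matrix.diagonal _ *ᵥ ψ) n = _
      rw [Matrix.mulVec_diagonal]
      rw [Vsec, Matrix.diagonal_apply_eq]
    simp only [dotProduct]
    refine Finset.sum_congr rfl fun n _ => ?_
    rw [hVapply n, hxψ n]
    rw [show Real.sqrt (Vsec nx ny nz Δx Δy Δz n n) * ψ n
        * (Real.sqrt (Vsec nx ny nz Δx Δy Δz n n) * ψ n)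
        = (Real.sqrt (Vsec nx ny nz Δx Δy Δz n n)
            * Real.sqrt (Vsec nx ny nz Δx Δy Δz n n)) * (ψ n * ψ n) by ring,
      Real.mul_self_sqrt (le_of_lt (hVpos n))]
    ring
  -- cell spectral data
  have hHerm : ∀ c : Fin nz × Fin ny × Fin nx,
      ((8/(ℏ*Δx*Δy*Δz)) • Hcell nx ny nz ℏ m Δx Δy Δz U c).IsHermitian :=
    fun c => Scell_isHermitian ℏ m Δx Δy Δz _ U c
  set ρ : (Fin nz × Fin ny × Fin nx) → ℝ :=
    fun c => Finset.univ.sup' Finset.univ_nonempty (fun i => |(hHerm c).eigenvalues i|) with hρ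
  have hρle : ∀ c i, |(hHerm c).eigenvalues i| ≤ ρ c := by
    intro c i
    simp only [hρ]
    exact Finset.le_sup' (fun i => |(hHerm c).eigenvalues i|) (Finset.mem_univ i)
  have hρbound : ∀ c, Δt * ρ c < 2 := by
    intro c
    obtain ⟨i, -, hi⟩ := Finset.exists_mem_eq_sup' (Finset.univ_nonempty)
      (fun i => |(hHerm c).eigenvalues i|)
    simp only [hρ]
    rw [hi]
    exact hcell c _ ((hHerm c).eigenvalues_mem_spectrum_real i)
  -- per-cell Rayleigh bound
  have hcellR : ∀ (c : Fin nz × Fin ny × Fin nx) (v : Fin 2 × Fin 2 × Fin 2 → ℝ),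
      |(1/ℏ) * (v ⬝ᵥ (Hcell nx ny nz ℏ m Δx Δy Δz U c *ᵥ v))|
        ≤ (Δx*Δy*Δz/8) * ρ c * (v ⬝ᵥ v) := by
    intro c v
    have hb := abs_quadform_le (hHerm c) (hρle c) v
    rw [Matrix.smul_mulVec, dotProduct_smul, smul_eq_mul] at hb
    have hscale : (1/ℏ) * (v ⬝ᵥ (Hcell nx ny nz ℏ m Δx Δy Δz U c *ᵥ v))
        = (Δx*Δy*Δz/8) * ((8/(ℏ*Δx*Δy*Δz)) * (v ⬝ᵥ (Hcell nx ny nz ℏ m Δx Δy Δz U c *ᵥ v))) := by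
      field_simp
    rw [hscale, abs_mul, abs_of_nonneg (by positivity : (0:ℝ) ≤ Δx*Δy*Δz/8)]
    calc (Δx*Δy*Δz/8) * |(8/(ℏ*Δx*Δy*Δz)) * (v ⬝ᵥ (Hcell nx ny nz ℏ m Δx Δy Δz U c *ᵥ v))|
        ≤ (Δx*Δy*Δz/8) * (ρ c * (v ⬝ᵥ v)) := by
          apply mul_le_mul_of_nonneg_left _ (by positivity)
          exact hb
      _ = (Δx*Δy*Δz/8) * ρ c * (v ⬝ᵥ v) := by ring
  -- the global bound
  have hcellsne : (Finset.univ : Finset (Fin nz × Fin ny × Fin nx)).Nonempty :=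
    ⟨(⟨0, hnz⟩, ⟨0, hny⟩, ⟨0, hnx⟩), Finset.mem_univ _⟩
  set P : ℝ := Finset.univ.sup' hcellsne ρ with hP
  have hPρ : ∀ c, ρ c ≤ P := fun c => Finset.le_sup' ρ (Finset.mem_univ c)
  have hPbound : Δt * P < 2 := by
    obtain ⟨c0, -, hc0⟩ := Finset.exists_mem_eq_sup' hcellsne ρ
    simp only [hP]
    rw [hc0]
    exact hρbound c0
  have hVcellform : ∀ (c : Fin nz × Fin ny × Fin nx) (v : Fin 2 × Fin 2 × Fin 2 → ℝ),
      v ⬝ᵥ (Vcell Δx Δy Δz *ᵥ v) = (Δx*Δy*Δz/8) * (v ⬝ᵥ v) := by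
    intro c v
    rw [Vcell, Matrix.smul_mulVec, dotProduct_smul, smul_eq_mul,
      Matrix.one_mulVec]
  have hbound : |μ| * (x ⬝ᵥ x) ≤ P * (x ⬝ᵥ x) := by
    calc |μ| * (x ⬝ᵥ x) = |μ * (x ⬝ᵥ x)| := by
          rw [abs_mul, abs_of_nonneg (le_of_lt hxx)]
      _ = |∑ c, (1/ℏ) * ((restr c ψ) ⬝ᵥ (Hcell nx ny nz ℏ m Δx Δy Δz U c *ᵥ restr c ψ))| := by
          rw [hid1, Finset.mul_sum]
      _ ≤ ∑ c, |(1/ℏ) * ((restr c ψ) ⬝ᵥ (Hcell nx ny nz ℏ m Δx Δy Δz U c *ᵥ restr c ψ))| :=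
          Finset.abs_sum_le_sum_abs _ _
      _ ≤ ∑ c, (Δx*Δy*Δz/8) * ρ c * ((restr c ψ) ⬝ᵥ (restr c ψ)) :=
          Finset.sum_le_sum fun c _ => hcellR c (restr c ψ)
      _ ≤ ∑ c, P * ((Δx*Δy*Δz/8) * ((restr c ψ) ⬝ᵥ (restr c ψ))) := by
          refine Finset.sum_le_sum fun c _ => ?_
          rw [show (Δx*Δy*Δz/8) * ρ c * ((restr c ψ) ⬝ᵥ (restr c ψ))
              = ρ c * ((Δx*Δy*Δz/8) * ((restr c ψ) ⬝ᵥ (restr c ψ))) by ring]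
          exact mul_le_mul_of_nonneg_right (hPρ c)
            (mul_nonneg (by positivity) (Finset.sum_nonneg fun i _ => mul_self_nonneg _))
      _ = P * (x ⬝ᵥ x) := by
          rw [← Finset.mul_sum, hid2]
          congr 1
          refine Finset.sum_congr rfl fun c _ => ?_
          rw [hVcellform c]
  have hfin : |μ| ≤ P := le_of_mul_le_mul_right (by simpa [mul_comm] using hbound) hxx
  calc Δt * |μ| ≤ Δt * P := mul_le_mul_of_nonneg_left hfin (le_of_lt hΔt)
    _ < 2 := hPbound

end
end
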